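/- arXiv:1712.08984 — 6 statements merged into one kernel-verified Lean document; each statement's English description precedes it below -/
import Mathlib

section
/- Let q be an odd prime power, ω a generator of F_{q²}^×, and χ a multiplicative character of F_{q²} with values in ℂ (extended by χ(0)=0) whose restriction to F_q^× equals the quadratic character η of F_q. Let ℓ be an integer not divisible by q+1. Then, as an identity in ℂ, ∑_{x∈F_q} χ(1 + ω^ℓ·x) = (χ(−1)·G_{q²}(χ)·G_q(η)/q) · χ(ω^{qℓ})^{−1} · χ(ω^{ℓq} − ω^{ℓ}). -/
noncomputable section

open Complex

open Classical in
/-- The quadratic character of a finite field, with values in `ℂ`. -/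
noncomputable def quadChar (F : Type*) [Field F] : F → ℂ :=
  fun x => if x = 0 then 0 else if IsSquare x then 1 else -1

set_option maxHeartbeats 1000000 in
/-- evaluation of `∑_{x∈F_q} χ(1 + ω^ℓ x)` (Lemma 3.1 of the paper). -/
theorem stmt_3 (q : ℕ) (hq : IsPrimePow q) (hqodd : Odd q)
    (F F2 : Type) [Field F] [Fintype F] [Field F2] [Fintype F2] [Algebra F F2]
    (hF : Fintype.card F = q) (hF2 : Fintype.card F2 = q ^ 2)
    (ω : F2ˣ) (hω : ∀ x : F2ˣ, x ∈ Subgroup.zpowers ω)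
    (ψ : AddChar F ℂ) (hψ : ∃ a, ψ a ≠ 1)
    (tr : F2 → F) (htr : ∀ x : F2, algebraMap F F2 (tr x) = x + x ^ q)
    (χ : MulChar F2 ℂ)
    (hχη : ∀ x : F, x ≠ 0 → χ (algebraMap F F2 x) = quadChar F x)
    (ℓ : ℤ) (hℓ : ¬ ((q : ℤ) + 1 ∣ ℓ)) :
    ∑ x : F, χ (1 + ((ω ^ ℓ : F2ˣ) : F2) * algebraMap F F2 x) =
      (χ (-1) * (∑ y : F2, χ y * ψ (tr y)) * (∑ x : F, quadChar F x * ψ x) / q) *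
        (χ (((ω ^ ((q : ℤ) * ℓ) : F2ˣ) : F2)))⁻¹ *
        χ (((ω ^ (ℓ * (q : ℤ)) : F2ˣ) : F2) - ((ω ^ ℓ : F2ˣ) : F2)) := by
  classical
  have hinj : Function.Injective (algebraMap F F2) := (algebraMap F F2).injective
  -- characteristic facts
  have hqmod : q % 2 = 1 := Nat.odd_iff.mp hqodd
  have hchar2 : ringChar F ≠ 2 := by
    intro h
    have h2 := FiniteField.even_card_iff_char_two.mp h
    rw [hF] at h2
    omega
  have h2F : (2 : F) ≠ 0 := Ring.two_ne_zero hchar2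
  obtain ⟨n, hrp, hcard⟩ := FiniteField.card F (ringChar F)
  haveI : Fact (ringChar F).Prime := ⟨hrp⟩
  haveI : CharP F2 (ringChar F) := charP_of_injective_algebraMap hinj (ringChar F)
  have hqpow : q = ringChar F ^ (n : ℕ) := by rw [← hF, hcard]
  have hq1 : 1 < q := by
    rw [hqpow]
    exact Nat.one_lt_pow (by positivity) hrp.one_lt
  have hqC : (q : ℂ) ≠ 0 := Nat.cast_ne_zero.mpr (by omega)
  have hfrob : ∀ x y : F2, (x + y) ^ q = x ^ q + y ^ q := by
    intro x y
    rw [hqpow]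
    exact add_pow_char_pow x y (ringChar F) (n : ℕ)
  have hnegq : ∀ x : F2, (-x) ^ q = -(x ^ q) := fun x => Odd.neg_pow hqodd x
  have hsubq : ∀ x y : F2, (x - y) ^ q = x ^ q - y ^ q := by
    intro x y
    rw [sub_eq_add_neg, hfrob, hnegq, sub_eq_add_neg]
  have halg : ∀ t : F, (algebraMap F F2 t) ^ q = algebraMap F F2 t := by
    intro t
    rw [← map_pow, ← hF, FiniteField.pow_card]
  have hx2 : ∀ x : F2, x ^ (q * q) = x := by
    intro x
    have := FiniteField.pow_card x
    rwa [hF2, pow_two] at this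
  -- trace basics
  have htr0 : tr 0 = 0 := by
    apply hinj
    rw [htr, map_zero, zero_pow (by omega : q ≠ 0), add_zero]
  have htradd : ∀ x y : F2, tr (x + y) = tr x + tr y := by
    intro x y
    apply hinj
    rw [map_add, htr, htr, htr, hfrob]
    ring
  have htrmul : ∀ (z : F2) (x : F), tr (z * algebraMap F F2 x) = x * tr z := by
    intro z x
    apply hinj
    rw [htr, map_mul, htr, mul_pow, halg]
    ring
  have htralg : ∀ s : F, tr (algebraMap F F2 s) = 2 * s := by
    intro s
    apply hinj
    rw [htr, halg, map_mul, map_ofNat]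
    ring
  set T : F2 →+ F := { toFun := tr, map_zero' := htr0, map_add' := htradd } with hT
  set ψ' : AddChar F2 ℂ := ψ.compAddMonoidHom T with hψ'
  have hψ'app : ∀ z : F2, ψ' z = ψ (tr z) := fun z => rfl
  have hψne : ψ ≠ 1 := by
    intro h
    obtain ⟨a, ha⟩ := hψ
    exact ha (by rw [h]; rfl)
  have hψprim : ψ.IsPrimitive := AddChar.IsPrimitive.of_ne_one hψne
  have hψ'ne : ψ' ≠ 1 := by
    intro h
    obtain ⟨a, ha⟩ := hψ
    apply ha
    have : ψ' (algebraMap F F2 (2⁻¹ * a)) = 1 := by rw [h]; rfl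
    rwa [hψ'app, htralg, ← mul_assoc, mul_inv_cancel₀ h2F, one_mul] at this
  have hψ'prim : ψ'.IsPrimitive := AddChar.IsPrimitive.of_ne_one hψ'ne
  -- the quadratic character
  set η : MulChar F ℂ := (quadraticChar F).ringHomComp (Int.castRingHom ℂ) with hη
  have hqc : ∀ x : F, quadChar F x = η x := by
    intro x
    rw [hη, MulChar.ringHomComp_apply, quadraticChar_apply, quadraticCharFun]
    by_cases hx : x = 0
    · simp [quadChar, hx]
    · by_cases hs : IsSquare x <;> simp [quadChar, hx, hs]
  have hηsq : ∀ t : F, t ≠ 0 → η t * η t = 1 := by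
    intro t ht
    have h := quadraticChar_sq_one ht
    have h2 : ((quadraticChar F t : ℤ) : ℂ) * ((quadraticChar F t : ℤ) : ℂ) = 1 := by
      rw [← Int.cast_mul, ← pow_two, h, Int.cast_one]
    simpa [hη, MulChar.ringHomComp_apply] using h2
  have hχalg : ∀ t : F, χ (algebraMap F F2 t) = η t := by
    intro t
    by_cases ht : t = 0
    · rw [ht, map_zero, MulChar.map_zero, MulChar.map_zero]
    · rw [hχη t ht, hqc]
  have hχne : ∀ {x : F2}, x ≠ 0 → χ x ≠ 0 := by
    intro x hx
    have h1 : χ x * χ x⁻¹ = 1 := by rw [← map_mul, mul_inv_cancel₀ hx, map_one]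
    exact left_ne_zero_of_mul_eq_one h1
  have hχ1 : χ ≠ 1 := by
    intro h
    obtain ⟨u, hu⟩ := FiniteField.exists_nonsquare hchar2
    have hu0 : u ≠ 0 := by rintro rfl; exact hu ⟨0, by ring⟩
    have hau : algebraMap F F2 u ≠ 0 := fun hh => hu0 (by apply hinj; rw [hh, map_zero])
    have h1 : χ (algebraMap F F2 u) = 1 := by
      rw [h, MulChar.one_apply (isUnit_iff_ne_zero.mpr hau)]
    rw [hχη u hu0] at h1
    simp only [quadChar, hu0, hu, if_false] at h1
    norm_num at h1
  have hχinv1 : χ⁻¹ ≠ 1 := by simpa using hχ1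
  -- the element b = ω^ℓ and related quantities
  set b : F2 := ((ω ^ ℓ : F2ˣ) : F2) with hbdef
  have hb0 : b ≠ 0 := Units.ne_zero _
  have hbq : b ^ q ≠ b := by
    intro h
    apply hℓ
    have hu : (ω ^ ℓ) ^ (q : ℕ) = ω ^ ℓ := Units.ext (by
      rw [Units.val_pow_eq_pow_val]; exact h)
    have hz : ω ^ (ℓ * (q : ℤ)) = ω ^ ℓ := by
      rw [zpow_mul, zpow_natCast]; exact hu
    have hz1 : ω ^ (ℓ * (q : ℤ) - ℓ) = 1 := by
      rw [zpow_sub, hz]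
      simp
    have hdvd : ((orderOf ω : ℕ) : ℤ) ∣ ℓ * (q : ℤ) - ℓ := orderOf_dvd_iff_zpow_eq_one.mpr hz1
    have hord : orderOf ω = q ^ 2 - 1 := by
      rw [orderOf_eq_card_of_forall_mem_zpowers hω, Nat.card_eq_fintype_card,
        Fintype.card_units, hF2]
    rw [hord] at hdvd
    have hcast : ((q ^ 2 - 1 : ℕ) : ℤ) = ((q : ℤ) + 1) * ((q : ℤ) - 1) := by
      have h1 : (1 : ℕ) ≤ q ^ 2 := by nlinarith
      push_cast [Nat.cast_sub h1]
      ring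
    rw [hcast] at hdvd
    have hfac : ℓ * (q : ℤ) - ℓ = ℓ * ((q : ℤ) - 1) := by ring
    rw [hfac] at hdvd
    have hq1' : (q : ℤ) - 1 ≠ 0 := by
      intro h'
      have : (q : ℤ) = 1 := by linarith
      omega
    exact (mul_dvd_mul_iff_right hq1').mp hdvd
  set θ : F2 := b ^ q - b with hθdef
  have hθ0 : θ ≠ 0 := sub_ne_zero.mpr hbq
  have hbq0 : b ^ q ≠ 0 := pow_ne_zero q hb0
  have hθq : θ ^ q = -θ := by
    rw [hθdef, hsubq, ← pow_mul, hx2]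
    ring
  set γ : F2 := θ * b⁻¹ with hγdef
  have hγ0 : γ ≠ 0 := mul_ne_zero hθ0 (inv_ne_zero hb0)
  have hγq : γ ^ q = -(θ * (b ^ q)⁻¹) := by
    rw [hγdef, mul_pow, hθq, inv_pow]
    ring
  have htrθ : tr θ = 0 := by
    apply hinj
    rw [htr, hθq, map_zero]
    ring
  set c : F := tr γ with hcdef
  have halgc : algebraMap F F2 c = θ ^ 2 * (b⁻¹ * (b ^ q)⁻¹) := by
    rw [hcdef, htr, hγq, hγdef, hθdef]
    field_simp
    ring
  have hc0 : c ≠ 0 := by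
    intro h
    rw [h, map_zero] at halgc
    exact mul_ne_zero (pow_ne_zero 2 hθ0)
      (mul_ne_zero (inv_ne_zero hb0) (inv_ne_zero hbq0)) halgc.symm
  -- root-counting lemma: fixed points of x ↦ x^q are exactly the image of F
  have hroot : ∀ x : F2, x ^ q = x → ∃ t : F, algebraMap F F2 t = x := by
    intro x hx
    set P : Polynomial F2 := Polynomial.X ^ q - Polynomial.X with hP
    have hPne : P ≠ 0 := by
      intro h
      apply hbq
      have hev : Polynomial.eval b P = 0 := by rw [h]; simp
      rw [hP] at hev
      simp only [Polynomial.eval_sub, Polynomial.eval_pow, Polynomial.eval_X] at hev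
      exact sub_eq_zero.mp hev
    have hdeg : P.natDegree ≤ q := by
      refine le_trans (Polynomial.natDegree_sub_le _ _) ?_
      simp [Polynomial.natDegree_X_pow, Polynomial.natDegree_X]
      omega
    set Φ : Finset F2 := Finset.univ.image (algebraMap F F2) with hΦ
    set Tf : Finset F2 := Finset.univ.filter fun y : F2 => y ^ q = y with hTf
    have hΦT : Φ ⊆ Tf := by
      intro y hy
      simp only [hΦ, Finset.mem_image, Finset.mem_univ, true_and] at hy
      obtain ⟨t, rfl⟩ := hy
      simp only [hTf, Finset.mem_filter, Finset.mem_univ, true_and]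
      exact halg t
    have hTcard : Tf.card ≤ q := by
      calc Tf.card ≤ P.roots.toFinset.card := by
            apply Finset.card_le_card
            intro y hy
            simp only [hTf, Finset.mem_filter, Finset.mem_univ, true_and] at hy
            rw [Multiset.mem_toFinset, Polynomial.mem_roots hPne]
            simp only [hP, Polynomial.IsRoot, Polynomial.eval_sub, Polynomial.eval_pow,
              Polynomial.eval_X]
            rw [sub_eq_zero]
            exact hy
        _ ≤ Multiset.card P.roots := P.roots.toFinset_card_le
        _ ≤ P.natDegree := P.card_roots'
        _ ≤ q := hdeg
    have hΦcard : Φ.card = q := by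
      rw [hΦ, Finset.card_image_of_injective _ hinj, Finset.card_univ, hF]
    have hEq : Φ = Tf := Finset.eq_of_subset_of_card_le hΦT (by rw [hΦcard]; exact hTcard)
    have hxT : x ∈ Tf := by
      simp only [hTf, Finset.mem_filter, Finset.mem_univ, true_and]
      exact hx
    rw [← hEq] at hxT
    simp only [hΦ, Finset.mem_image, Finset.mem_univ, true_and] at hxT
    exact hxT
  -- kernel of the twisted trace
  have hker : ∀ w : F2, tr (b * w) = 0 ↔ ∃ t : F, algebraMap F F2 t * γ = w := by
    intro w
    constructor
    · intro h
      have h0 := htr (b * w)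
      rw [h, map_zero, mul_pow] at h0
      rcases eq_or_ne w 0 with rfl | hw
      · exact ⟨0, by rw [map_zero, zero_mul]⟩
      · have hbw : w ^ q * b ^ q = -(b * w) := by linear_combination -h0
        set u : F2 := w * b * θ⁻¹ with hu
        have huq : u ^ q = u := by
          rw [hu, mul_pow, mul_pow, inv_pow, hθq, hbw, inv_neg]
          ring
        obtain ⟨t, ht⟩ := hroot u huq
        refine ⟨t, ?_⟩
        rw [ht, hu, hγdef]
        field_simp
    · rintro ⟨t, rfl⟩
      have hrw : b * (algebraMap F F2 t * γ) = θ * algebraMap F F2 t := by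
        rw [hγdef]
        field_simp
      rw [hrw, htrmul, htrθ, mul_zero]
  -- Gauss sums
  set G' : ℂ := gaussSum χ⁻¹ ψ' with hG'
  set Gχ : ℂ := gaussSum χ ψ' with hGχ
  set Gq : ℂ := gaussSum η ψ with hGq
  have hinvχ : ∀ x : F2, χ x⁻¹ = (χ x)⁻¹ := fun x => by
    rw [← MulChar.inv_apply', MulChar.inv_apply_eq_inv']
  have L5 : ∀ z : F2, χ z * G' = ∑ w : F2, χ⁻¹ w * ψ' (z * w) := by
    intro z
    rcases eq_or_ne z 0 with rfl | hz
    · rw [MulChar.map_zero, zero_mul]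
      symm
      calc ∑ w : F2, χ⁻¹ w * ψ' (0 * w) = ∑ w : F2, χ⁻¹ w := by
            refine Finset.sum_congr rfl fun w _ => ?_
            rw [zero_mul, AddChar.map_zero_eq_one, mul_one]
        _ = 0 := MulChar.sum_eq_zero_of_ne_one hχinv1
    · have hgs := gaussSum_mulShift χ⁻¹ ψ' (Units.mk0 z hz)
      rw [← hG'] at hgs
      have hms : gaussSum χ⁻¹ (AddChar.mulShift ψ' ((Units.mk0 z hz : F2ˣ) : F2))
          = ∑ w : F2, χ⁻¹ w * ψ' (z * w) := by
        simp [gaussSum, AddChar.mulShift_apply]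
      rw [hms] at hgs
      have hzuv : ((Units.mk0 z hz : F2ˣ) : F2) = z := rfl
      rw [hzuv, MulChar.inv_apply_eq_inv'] at hgs
      rw [← hgs, ← mul_assoc, mul_inv_cancel₀ (hχne hz), one_mul]
  have hsum_x : ∀ d : F, (∑ x : F, ψ (x * d)) = (if d = 0 then (q : ℂ) else 0) := by
    intro d
    rw [AddChar.sum_mulShift d hψprim, hF]
    split_ifs <;> simp
  have key3 : ∀ t : F, χ⁻¹ (algebraMap F F2 t * γ) * ψ' (algebraMap F F2 t * γ)
      = χ⁻¹ γ * (η t * ψ (t * c)) := by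
    intro t
    rcases eq_or_ne t 0 with rfl | ht
    · simp [MulChar.map_zero]
    · have h1 : χ⁻¹ (algebraMap F F2 t * γ) = η t * χ⁻¹ γ := by
        rw [map_mul]
        congr 1
        rw [MulChar.inv_apply_eq_inv', hχalg]
        exact inv_eq_of_mul_eq_one_right (hηsq t ht)
      have h2 : ψ' (algebraMap F F2 t * γ) = ψ (t * c) := by
        rw [hψ'app, mul_comm, htrmul, ← hcdef]
      rw [h1, h2]
      ring
  have hGqshift : (∑ t : F, η t * ψ (t * c)) = η c * Gq := by
    have hgs := gaussSum_mulShift η ψ (Units.mk0 c hc0)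
    rw [← hGq] at hgs
    have hms : gaussSum η (AddChar.mulShift ψ ((Units.mk0 c hc0 : Fˣ) : F))
        = ∑ t : F, η t * ψ (t * c) := by
      simp [gaussSum, AddChar.mulShift_apply, mul_comm]
    rw [hms] at hgs
    have hcuv : ((Units.mk0 c hc0 : Fˣ) : F) = c := rfl
    rw [hcuv] at hgs
    calc (∑ t : F, η t * ψ (t * c)) = (η c * η c) * ∑ t : F, η t * ψ (t * c) := by
          rw [hηsq c hc0, one_mul]
      _ = η c * Gq := by rw [mul_assoc, hgs]
  -- main computation
  have key1 : (∑ x : F, χ (1 + b * algebraMap F F2 x)) * G'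
      = (q : ℂ) * (χ⁻¹ γ * (η c * Gq)) := by
    rw [Finset.sum_mul]
    calc ∑ x : F, χ (1 + b * algebraMap F F2 x) * G'
        = ∑ x : F, ∑ w : F2, χ⁻¹ w * ψ' ((1 + b * algebraMap F F2 x) * w) :=
          Finset.sum_congr rfl fun x _ => L5 _
      _ = ∑ w : F2, ∑ x : F, (χ⁻¹ w * ψ' w) * ψ (x * tr (b * w)) := by
          rw [Finset.sum_comm]
          refine Finset.sum_congr rfl fun w _ => Finset.sum_congr rfl fun x _ => ?_
          have hrw : (1 + b * algebraMap F F2 x) * w = w + (b * w) * algebraMap F F2 x := by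
            ring
          rw [hrw, AddChar.map_add_eq_mul, hψ'app, hψ'app, htrmul]
          ring
      _ = ∑ w : F2, (χ⁻¹ w * ψ' w) * (if tr (b * w) = 0 then (q : ℂ) else 0) := by
          refine Finset.sum_congr rfl fun w _ => ?_
          rw [← Finset.mul_sum, hsum_x]
      _ = ∑ w ∈ Finset.univ.filter (fun w : F2 => tr (b * w) = 0),
            (χ⁻¹ w * ψ' w) * (q : ℂ) := by
          rw [Finset.sum_filter]
          refine Finset.sum_congr rfl fun w _ => ?_
          split_ifs <;> simp
      _ = ∑ t : F, (χ⁻¹ (algebraMap F F2 t * γ) * ψ' (algebraMap F F2 t * γ)) * (q : ℂ) := by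
          symm
          refine Finset.sum_bij (fun t _ => algebraMap F F2 t * γ) ?_ ?_ ?_ ?_
          · intro t _
            simp only [Finset.mem_filter, Finset.mem_univ, true_and]
            exact (hker _).mpr ⟨t, rfl⟩
          · intro t1 _ t2 _ he
            exact hinj (mul_right_cancel₀ hγ0 he)
          · intro w hw
            simp only [Finset.mem_filter, Finset.mem_univ, true_and] at hw
            obtain ⟨t, ht⟩ := (hker w).mp hw
            exact ⟨t, Finset.mem_univ t, ht⟩
          · intro t _
            rfl
      _ = (q : ℂ) * (χ⁻¹ γ * (η c * Gq)) := by
          calc ∑ t : F, (χ⁻¹ (algebraMap F F2 t * γ) * ψ' (algebraMap F F2 t * γ)) * (q : ℂ)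
              = ∑ t : F, (χ⁻¹ γ * (η t * ψ (t * c))) * (q : ℂ) :=
                Finset.sum_congr rfl fun t _ => by rw [key3]
            _ = (q : ℂ) * (χ⁻¹ γ * ∑ t : F, η t * ψ (t * c)) := by
                rw [← Finset.sum_mul, ← Finset.mul_sum]
                ring
            _ = (q : ℂ) * (χ⁻¹ γ * (η c * Gq)) := by rw [hGqshift]
  have hχm1sq : χ (-1) * χ (-1) = 1 := by
    rw [← map_mul, neg_mul_neg, one_mul, map_one]
  have stepB : Gχ * G' = χ (-1) * (q : ℂ) ^ 2 := by
    have h1 := gaussSum_mul_gaussSum_eq_card hχ1 hψ'prim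
    rw [← hGχ] at h1
    have h2 := mul_gaussSum_inv_eq_gaussSum χ⁻¹ ψ'
    rw [← hG'] at h2
    have h3 : χ⁻¹ (-1 : F2) = χ (-1) := by
      rw [MulChar.inv_apply', inv_neg, inv_one]
    rw [h3] at h2
    have hcard2 : ((Fintype.card F2 : ℂ)) = (q : ℂ) ^ 2 := by rw [hF2]; push_cast; ring
    calc Gχ * G' = χ (-1) * (Gχ * gaussSum χ⁻¹ ψ'⁻¹) := by rw [← h2]; ring
      _ = χ (-1) * (q : ℂ) ^ 2 := by rw [h1, hcard2]
  have hG'0 : G' ≠ 0 := by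
    intro h
    rw [h, mul_zero] at stepB
    exact mul_ne_zero (hχne (by norm_num)) (pow_ne_zero 2 hqC) stepB.symm
  have hid : χ⁻¹ γ * η c = (χ (b ^ q))⁻¹ * χ θ := by
    have hγχ : χ γ = χ θ * (χ b)⁻¹ := by
      rw [hγdef, map_mul, hinvχ]
    have hcχ : η c = χ θ ^ 2 * ((χ b)⁻¹ * (χ (b ^ q))⁻¹) := by
      rw [← hχalg, halgc, map_mul, map_pow, map_mul, hinvχ, hinvχ]
    rw [MulChar.inv_apply_eq_inv', hγχ, hcχ]
    have h1 : χ θ ≠ 0 := hχne hθ0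
    have h2 : χ b ≠ 0 := hχne hb0
    have h3 : χ (b ^ q) ≠ 0 := hχne hbq0
    field_simp
  -- final assembly
  have e2 : ((ω ^ (ℓ * (q : ℤ)) : F2ˣ) : F2) = b ^ q := by
    rw [zpow_mul, zpow_natCast, Units.val_pow_eq_pow_val]
  have e1 : ((ω ^ ((q : ℤ) * ℓ) : F2ˣ) : F2) = b ^ q := by rw [mul_comm]; exact e2
  have e3 : (∑ y : F2, χ y * ψ (tr y)) = Gχ := by
    rw [hGχ, gaussSum]
    exact Finset.sum_congr rfl fun y _ => by rw [hψ'app]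
  have e4 : (∑ x : F, quadChar F x * ψ x) = Gq := by
    rw [hGq, gaussSum]
    exact Finset.sum_congr rfl fun x _ => by rw [hqc]
  rw [e1, e2, e3, e4, ← hθdef]
  apply mul_right_cancel₀ hG'0
  rw [key1]
  have hq2 : χ (-1) * (Gχ * G') = (q : ℂ) ^ 2 := by
    rw [stepB, ← mul_assoc, hχm1sq, one_mul]
  have lhs' : (q : ℂ) * (χ⁻¹ γ * (η c * Gq)) = (q : ℂ) * (((χ (b ^ q))⁻¹ * χ θ) * Gq) := by
    rw [show χ⁻¹ γ * (η c * Gq) = (χ⁻¹ γ * η c) * Gq from by ring, hid]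
  rw [lhs']
  have expand : χ (-1) * Gχ * Gq / (q : ℂ) * (χ (b ^ q))⁻¹ * χ θ * G'
      = (χ (-1) * (Gχ * G')) * Gq * (χ (b ^ q))⁻¹ * χ θ / (q : ℂ) := by ring
  rw [expand, hq2]
  rw [eq_div_iff hqC]
  ring
end
end

section
/- Let q be an odd prime power, ω a generator of F_{q²}^×, and χ a multiplicative character of F_{q²} with values in ℂ (extended by χ(0)=0) whose restriction to F_q^× equals the quadratic character η of F_q. Let ℓ be an integer not divisible by q+1. Then for every s ∈ F_q, as an identity in ℂ, ∑_{x∈F_q, x≠s} χ(1 + ω^ℓ·x)·η(x − s) = (G_{q²}(χ)·G_q(η)/q) · χ^{−1}(1 + ω^{qℓ}·s) · χ(ω^{ℓq} − ω^{ℓ}) − χ(ω^{ℓ}), where χ^{−1} denotes the inverse character of χ. -/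
noncomputable section

open Complex

open scoped Classical

private lemma quadChar_eq_comp (F : Type*) [Field F] [Fintype F] [DecidableEq F] (x : F) :
    quadChar F x = ((quadraticChar F).ringHomComp (Int.castRingHom ℂ)) x := by
  simp only [quadChar, MulChar.ringHomComp_apply, quadraticChar_apply, quadraticCharFun]
  split_ifs <;> simp

/-- evaluation of `∑_{x∈F_q, x≠s} χ(1 + ω^ℓ x)·η(x − s)`
(Lemma 3.2 of the paper). -/
theorem stmt_4 (q : ℕ) (hq : IsPrimePow q) (hqodd : Odd q)
    (F F2 : Type) [Field F] [Fintype F] [Field F2] [Fintype F2] [Algebra F F2]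
    (hF : Fintype.card F = q) (hF2 : Fintype.card F2 = q ^ 2)
    (ω : F2ˣ) (hω : ∀ x : F2ˣ, x ∈ Subgroup.zpowers ω)
    (ψ : AddChar F ℂ) (hψ : ∃ a, ψ a ≠ 1)
    (tr : F2 → F) (htr : ∀ x : F2, algebraMap F F2 (tr x) = x + x ^ q)
    (χ : MulChar F2 ℂ)
    (hχη : ∀ x : F, x ≠ 0 → χ (algebraMap F F2 x) = quadChar F x)
    (ℓ : ℤ) (hℓ : ¬ ((q : ℤ) + 1 ∣ ℓ)) :
    ∀ s : F,
      ∑ x ∈ Finset.univ.erase s,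
          χ (1 + ((ω ^ ℓ : F2ˣ) : F2) * algebraMap F F2 x) * quadChar F (x - s) =
        ((∑ y : F2, χ y * ψ (tr y)) * (∑ x : F, quadChar F x * ψ x) / q) *
            χ⁻¹ (1 + ((ω ^ ((q : ℤ) * ℓ) : F2ˣ) : F2) * algebraMap F F2 s) *
            χ (((ω ^ (ℓ * (q : ℤ)) : F2ˣ) : F2) - ((ω ^ ℓ : F2ˣ) : F2)) -
          χ ((ω ^ ℓ : F2ˣ) : F2) := by
  intro s
  classical
  -- ## basic numerology
  obtain ⟨p, n, hp, hn, hqpn⟩ := hq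
  have hpp : p.Prime := hp.nat_prime
  haveI : Fact p.Prime := ⟨hpp⟩
  have hq1 : 1 < q := hqpn ▸ Nat.one_lt_pow hn.ne' hpp.one_lt
  have hq0 : (q : ℂ) ≠ 0 := Nat.cast_ne_zero.mpr (by omega)
  have hp2 : p ≠ 2 := by
    rintro rfl
    have hev : 2 ∣ q := by rw [← hqpn]; exact dvd_pow_self 2 hn.ne'
    rw [Nat.odd_iff] at hqodd; omega
  -- characteristic of F and F2 is p
  have hcharF2 : CharP F2 p := by
    have i : CharP F2 (ringChar F2) := ringChar.charP F2
    obtain ⟨n', hp', hcard⟩ := FiniteField.card F2 (ringChar F2)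
    have h1 : (ringChar F2) ^ (n' : ℕ) = p ^ (2 * n) := by
      rw [← hcard, hF2, ← hqpn, ← pow_mul, mul_comm]
    have hdvd : p ∣ ringChar F2 :=
      hpp.dvd_of_dvd_pow (h1 ▸ dvd_pow_self p (by omega : 2 * n ≠ 0))
    have he : ringChar F2 = p := ((Nat.prime_dvd_prime_iff_eq hpp hp').mp hdvd).symm
    exact he ▸ i
  have hcharF : CharP F p := by
    have i : CharP F (ringChar F) := ringChar.charP F
    obtain ⟨n', hp', hcard⟩ := FiniteField.card F (ringChar F)
    have h1 : (ringChar F) ^ (n' : ℕ) = p ^ n := by rw [← hcard, hF, ← hqpn]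
    have hdvd : p ∣ ringChar F :=
      hpp.dvd_of_dvd_pow (h1 ▸ dvd_pow_self p (by omega : n ≠ 0))
    have he : ringChar F = p := ((Nat.prime_dvd_prime_iff_eq hpp hp').mp hdvd).symm
    exact he ▸ i
  have hrcF : ringChar F ≠ 2 := by rw [ringChar.eq F p]; exact hp2
  -- Frobenius facts
  have hfrobadd : ∀ x y : F2, (x + y) ^ q = x ^ q + y ^ q := by
    intro x y; rw [← hqpn]; exact add_pow_char_pow x y p n
  have hfrobsub : ∀ x y : F2, (x - y) ^ q = x ^ q - y ^ q := by
    intro x y; rw [← hqpn]; exact sub_pow_char_pow (p := p) (n := n) x y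
  have hpowF : ∀ c : F, c ^ q = c := by intro c; rw [← hF]; exact FiniteField.pow_card c
  have hfix : ∀ c : F, (algebraMap F F2 c) ^ q = algebraMap F F2 c := by
    intro c; rw [← map_pow, hpowF]
  have hpowF2 : ∀ z : F2, (z ^ q) ^ q = z := by
    intro z; rw [← pow_mul, ← sq, ← hF2]; exact FiniteField.pow_card z
  have hinj : Function.Injective (algebraMap F F2) := (algebraMap F F2).injective
  -- trace facts
  have htr0 : tr 0 = 0 := by
    apply hinj; rw [htr, map_zero, zero_pow (by omega : q ≠ 0), add_zero]
  have htradd : ∀ x y : F2, tr (x + y) = tr x + tr y := by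
    intro x y; apply hinj; rw [map_add, htr, htr, htr, hfrobadd]; ring
  have htrsmul : ∀ (c : F) (z : F2), tr (algebraMap F F2 c * z) = c * tr z := by
    intro c z; apply hinj
    rw [htr, map_mul, htr, mul_pow, hfix, mul_add]
  -- the subfield: fixed points of x ↦ x^q
  have hE : ∀ y : F2, y ^ q = y ↔ ∃ c : F, algebraMap F F2 c = y := by
    intro y
    constructor
    · intro hy
      set Eset : Finset F2 := Finset.univ.filter (fun z : F2 => z ^ q = z) with hEset
      have hsub : Finset.univ.image (algebraMap F F2) ⊆ Eset := by
        intro z hz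
        obtain ⟨c, _, rfl⟩ := Finset.mem_image.mp hz
        simp [hEset, hfix c]
      have hcard1 : (Finset.univ.image (algebraMap F F2)).card = q := by
        rw [Finset.card_image_of_injective _ hinj, Finset.card_univ, hF]
      have hcard2 : Eset.card ≤ q := by
        have hne : (Polynomial.X ^ q - Polynomial.X : Polynomial F2) ≠ 0 :=
          FiniteField.X_pow_card_sub_X_ne_zero F2 hq1
        have hdeg : (Polynomial.X ^ q - Polynomial.X : Polynomial F2).natDegree = q :=
          FiniteField.X_pow_card_sub_X_natDegree_eq F2 hq1
        have hroots : Eset ⊆ (Polynomial.X ^ q - Polynomial.X :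
            Polynomial F2).roots.toFinset := by
          intro z hz
          have hz' : z ^ q = z := by simpa [hEset] using hz
          rw [Multiset.mem_toFinset, Polynomial.mem_roots hne]
          simp [Polynomial.IsRoot, sub_eq_zero, hz']
        calc Eset.card ≤ _ := Finset.card_le_card hroots
          _ ≤ (Polynomial.X ^ q - Polynomial.X : Polynomial F2).roots.card :=
              Multiset.toFinset_card_le _
          _ ≤ _ := (Polynomial.card_roots' _)
          _ = q := hdeg
      have heq : Finset.univ.image (algebraMap F F2) = Eset :=
        Finset.eq_of_subset_of_card_le hsub (hcard1 ▸ hcard2)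
      have hy' : y ∈ Eset := by simp [hEset, hy]
      rw [← heq, Finset.mem_image] at hy'
      obtain ⟨c, _, hc⟩ := hy'
      exact ⟨c, hc⟩
    · rintro ⟨c, rfl⟩; exact hfix c
  -- powers of ω outside the subfield
  have hord : orderOf ω = q ^ 2 - 1 := by
    rw [orderOf_eq_card_of_forall_mem_zpowers hω, Nat.card_units,
      Nat.card_eq_fintype_card, hF2]
  have hnotE : ∀ j : ℤ, ¬ ((q : ℤ) + 1 ∣ j) → ((ω ^ j : F2ˣ) : F2) ^ q ≠ ((ω ^ j : F2ˣ) : F2) := by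
    intro j hj h
    apply hj
    have h1 : (ω ^ j) ^ (q : ℕ) = ω ^ j := by
      ext; rw [Units.val_pow_eq_pow_val]; exact h
    have h2 : ω ^ (j * ((q : ℤ) - 1)) = 1 := by
      rw [zpow_mul, zpow_sub, zpow_one, zpow_natCast, h1, mul_inv_cancel]
    have h3 : ((orderOf ω : ℤ)) ∣ j * ((q : ℤ) - 1) := orderOf_dvd_iff_zpow_eq_one.mpr h2
    rw [hord] at h3
    have hcast : ((q ^ 2 - 1 : ℕ) : ℤ) = ((q : ℤ) + 1) * ((q : ℤ) - 1) := by
      have : (1 : ℕ) ≤ q ^ 2 := Nat.one_le_pow _ _ (by omega)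
      push_cast [this]; ring
    rw [hcast] at h3
    have hq1' : (q : ℤ) - 1 ≠ 0 := by
      have : (1 : ℤ) < q := by exact_mod_cast hq1
      omega
    rw [mul_comm ((q : ℤ) + 1) _, mul_comm j _] at h3
    exact (mul_dvd_mul_iff_left hq1').mp h3

  -- ## the quadratic character as a MulChar
  obtain ⟨ηC, hηCapp⟩ : ∃ ηC : MulChar F ℂ, ∀ x, ηC x = quadChar F x :=
    ⟨(quadraticChar F).ringHomComp (Int.castRingHom ℂ), fun x => (quadChar_eq_comp F x).symm⟩
  have hquad : ∀ x : F, quadChar F x = ηC x := fun x => (hηCapp x).symm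
  have hη2 : ∀ c : F, c ≠ 0 → ηC c * ηC c = 1 := by
    intro c hc
    rw [hηCapp]
    simp only [quadChar, if_neg hc]
    split_ifs <;> norm_num
  have hηinv : ∀ c : F, ηC c⁻¹ = ηC c := by
    intro c
    rcases eq_or_ne c 0 with rfl | hc
    · rw [inv_zero]
    · have h1 : ηC c⁻¹ * ηC c = 1 := by
        rw [← map_mul, inv_mul_cancel₀ hc, map_one]
      calc ηC c⁻¹ = ηC c⁻¹ * (ηC c * ηC c) := by rw [hη2 c hc, mul_one]
        _ = (ηC c⁻¹ * ηC c) * ηC c := by ring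
        _ = ηC c := by rw [h1, one_mul]
  have hχF : ∀ c : F, χ (algebraMap F F2 c) = ηC c := by
    intro c
    rcases eq_or_ne c 0 with rfl | hc
    · rw [map_zero, MulChar.map_zero, MulChar.map_zero]
    · rw [hχη c hc, hquad]
  have hχ1 : χ ≠ 1 := by
    obtain ⟨a, hna⟩ := FiniteField.exists_nonsquare hrcF
    have ha0 : a ≠ 0 := by rintro rfl; exact hna ⟨0, by ring⟩
    intro h
    have h1 := hχF a
    rw [h] at h1
    have hu : IsUnit (algebraMap F F2 a) :=
      isUnit_iff_ne_zero.mpr (fun hz => ha0 (hinj (by rw [hz, map_zero])))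
    have h2 : (1 : MulChar F2 ℂ) (algebraMap F F2 a) = 1 := by
      have h2' : (1 : MulChar F2 ℂ) ((hu.unit : F2ˣ) : F2) = 1 :=
        MulChar.one_apply_coe (R' := ℂ) hu.unit
      rwa [IsUnit.unit_spec] at h2'
    rw [h2] at h1
    rw [hηCapp] at h1
    simp only [quadChar, if_neg ha0, if_neg hna] at h1
    norm_num at h1
  have hχinv : ∀ z : F2, χ⁻¹ z = χ z⁻¹ := fun z => MulChar.inv_apply' χ z
  have hχinv1 : χ⁻¹ ≠ 1 := fun h => hχ1 (by rw [← inv_inv χ, h, inv_one])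
  -- ## additive character of F2
  obtain ⟨ψ', hψ'app⟩ : ∃ ψ' : AddChar F2 ℂ, ∀ z, ψ' z = ψ (tr z) :=
    ⟨{ toFun := fun z => ψ (tr z),
       map_zero_eq_one' := by
         show ψ (tr 0) = 1
         rw [htr0]; exact ψ.map_zero_eq_one,
       map_add_eq_mul' := fun a b => by
         show ψ (tr (a + b)) = ψ (tr a) * ψ (tr b)
         rw [htradd]; exact ψ.map_add_eq_mul _ _ }, fun z => rfl⟩
  have hψne : ψ ≠ 1 := AddChar.ne_one_iff.mpr hψ
  have hψprim : ψ.IsPrimitive := AddChar.IsPrimitive.of_ne_one hψne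
  have htwo : (2 : F2) ≠ 0 := by
    intro h
    have h2 : ((2 : ℕ) : F2) = 0 := by exact_mod_cast h
    have h3 := (CharP.cast_eq_zero_iff F2 p 2).mp h2
    exact hp2 ((Nat.prime_dvd_prime_iff_eq hpp Nat.prime_two).mp h3)
  have htr1 : tr 1 ≠ 0 := by
    intro h
    have h1 := htr 1
    rw [h, map_zero, one_pow] at h1
    exact htwo (by rw [← one_add_one_eq_two, ← h1])
  have hψ'ne : ψ' ≠ 1 := by
    rw [AddChar.ne_one_iff]
    obtain ⟨a, ha⟩ := hψ
    refine ⟨algebraMap F F2 (a * (tr 1)⁻¹) * 1, ?_⟩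
    rw [hψ'app, htrsmul, inv_mul_cancel_right₀ htr1]
    exact ha
  have hψ'prim : ψ'.IsPrimitive := AddChar.IsPrimitive.of_ne_one hψ'ne
  -- ## Gauss sums
  set Gχ := gaussSum χ ψ' with hGχ
  set Gχi := gaussSum χ⁻¹ ψ' with hGχi
  set Gη := gaussSum ηC ψ with hGη
  have key1 : ∀ z : F2, ∑ w : F2, χ⁻¹ w * ψ' (z * w) = χ z * Gχi := by
    intro z
    rcases eq_or_ne z 0 with rfl | hz
    · simp only [zero_mul, AddChar.map_zero_eq_one, mul_one]
      rw [MulChar.map_zero, zero_mul]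
      exact MulChar.sum_eq_zero_of_ne_one hχinv1
    · have hu := gaussSum_mulShift χ⁻¹ ψ' (Units.mk0 z hz)
      have h2 : gaussSum χ⁻¹ (AddChar.mulShift ψ' (Units.mk0 z hz))
          = ∑ w : F2, χ⁻¹ w * ψ' (z * w) := by
        simp [gaussSum, AddChar.mulShift_apply]
      rw [h2] at hu
      simp only [Units.val_mk0] at hu
      have h3 : χ z * χ⁻¹ z = 1 := by
        rw [hχinv, ← map_mul, mul_inv_cancel₀ hz, map_one]
      calc ∑ w : F2, χ⁻¹ w * ψ' (z * w)
          = (χ z * χ⁻¹ z) * ∑ w : F2, χ⁻¹ w * ψ' (z * w) := by rw [h3, one_mul]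
        _ = χ z * (χ⁻¹ z * ∑ w : F2, χ⁻¹ w * ψ' (z * w)) := by ring
        _ = χ z * Gχi := by rw [hu]
  have horthF : ∀ m : F, ∑ t : F, ψ (t * m) = if m = 0 then (q : ℂ) else 0 := by
    intro m
    have h1 := AddChar.sum_mulShift m hψprim
    rw [hF] at h1
    rw [h1]
    split_ifs <;> simp
  -- ## setting up the elements
  set W : F2 := ((ω ^ ℓ : F2ˣ) : F2) with hWdef
  set Wq : F2 := ((ω ^ (ℓ * (q : ℤ)) : F2ˣ) : F2) with hWqdef
  have hW0 : W ≠ 0 := Units.ne_zero _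
  have hWq0 : Wq ≠ 0 := Units.ne_zero _
  have hWpow : W ^ q = Wq := by
    rw [hWdef, hWqdef, ← Units.val_pow_eq_pow_val]
    congr 1
    rw [← zpow_natCast (ω ^ ℓ) q, ← zpow_mul]
  have hWinv : W⁻¹ = ((ω ^ (-ℓ) : F2ˣ) : F2) := by
    rw [hWdef, zpow_neg, ← Units.val_inv_eq_inv_val]
  set sbar : F2 := algebraMap F F2 s with hsbar
  set b : F2 := sbar + W⁻¹ with hbdef
  have hbq : b ^ q = sbar + Wq⁻¹ := by
    rw [hbdef, hfrobadd, inv_pow, hWpow, hsbar, hfix s]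
  have hbE : b ^ q ≠ b := by
    intro h
    have h1 : Wq⁻¹ = W⁻¹ := by
      rw [hbq, hbdef] at h
      exact add_left_cancel h
    have h2 : ((ω ^ (-ℓ) : F2ˣ) : F2) ^ q = ((ω ^ (-ℓ) : F2ˣ) : F2) := by
      rw [← hWinv, inv_pow, hWpow, h1]
    exact hnotE (-ℓ) (fun hd => hℓ (dvd_neg.mp hd)) h2
  have hb0 : b ≠ 0 := by
    intro h
    exact hbE (by rw [h, zero_pow (by omega : q ≠ 0)])
  have hbq0 : b ^ q ≠ 0 := pow_ne_zero _ hb0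
  -- ## the element z₀ with z₀^q = -z₀
  obtain ⟨z₀, hz₀ne, hz₀⟩ : ∃ z₀ : F2, z₀ ≠ 0 ∧ z₀ ^ q = -z₀ := by
    set Eset : Finset F2 := Finset.univ.filter (fun z : F2 => z ^ q = z) with hEset
    have hcard2 : Eset.card ≤ q := by
      have hne : (Polynomial.X ^ q - Polynomial.X : Polynomial F2) ≠ 0 :=
        FiniteField.X_pow_card_sub_X_ne_zero F2 hq1
      have hdeg : (Polynomial.X ^ q - Polynomial.X : Polynomial F2).natDegree = q :=
        FiniteField.X_pow_card_sub_X_natDegree_eq F2 hq1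
      have hroots : Eset ⊆ (Polynomial.X ^ q - Polynomial.X :
          Polynomial F2).roots.toFinset := by
        intro z hz
        have hz' : z ^ q = z := by simpa [hEset] using hz
        rw [Multiset.mem_toFinset, Polynomial.mem_roots hne]
        simp [Polynomial.IsRoot, sub_eq_zero, hz']
      calc Eset.card ≤ _ := Finset.card_le_card hroots
        _ ≤ (Polynomial.X ^ q - Polynomial.X : Polynomial F2).roots.card :=
            Multiset.toFinset_card_le _
        _ ≤ _ := Polynomial.card_roots' _
        _ = q := hdeg
    have hmaps : ∀ x ∈ Finset.univ, (fun x : F2 => x + x ^ q) x ∈ Eset := by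
      intro x _
      simp only [hEset, Finset.mem_filter, Finset.mem_univ, true_and]
      rw [hfrobadd, hpowF2]
      ring
    have hlt : Eset.card < (Finset.univ : Finset F2).card := by
      rw [Finset.card_univ, hF2]
      calc Eset.card ≤ q := hcard2
        _ < q ^ 2 := by nlinarith
    obtain ⟨x, _, y, _, hxy, hfe⟩ :=
      Finset.exists_ne_map_eq_of_card_lt_of_maps_to hlt hmaps
    refine ⟨x - y, sub_ne_zero.mpr hxy, ?_⟩
    rw [hfrobsub]
    have hfe' : x + x ^ q = y + y ^ q := hfe
    linear_combination hfe'
  have htrz₀ : tr z₀ = 0 := by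
    apply hinj
    rw [htr, hz₀, map_zero]
    ring
  set u₀ : F2 := z₀ * b⁻¹ with hu₀def
  have hu₀ne : u₀ ≠ 0 := mul_ne_zero hz₀ne (inv_ne_zero hb0)
  set m : F := tr u₀ with hmdef
  have hu₀q : u₀ ^ q = -z₀ * (b ^ q)⁻¹ := by
    rw [hu₀def, mul_pow, hz₀, inv_pow]
  have hamm : algebraMap F F2 m = z₀ * b⁻¹ - z₀ * (b ^ q)⁻¹ := by
    rw [hmdef, htr, hu₀q, hu₀def]
    ring
  have hm0 : m ≠ 0 := by
    intro h
    rw [h, map_zero] at hamm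
    have h2 : b⁻¹ = (b ^ q)⁻¹ := mul_left_cancel₀ hz₀ne (by linear_combination -hamm)
    exact hbE (inv_injective h2).symm
  -- ## the sum L over the affine line
  set L : ℂ := ∑ t : F, χ (1 + b * algebraMap F F2 t) with hLdef
  have hstepA : Gχi * L = (q : ℂ) *
      ∑ w ∈ Finset.univ.filter (fun w : F2 => tr (b * w) = 0), χ⁻¹ w * ψ' w := by
    calc Gχi * L = ∑ t : F, χ (1 + b * algebraMap F F2 t) * Gχi := by
          rw [hLdef, Finset.mul_sum]
          exact Finset.sum_congr rfl fun t _ => mul_comm _ _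
      _ = ∑ t : F, ∑ w : F2, χ⁻¹ w * ψ' ((1 + b * algebraMap F F2 t) * w) :=
          Finset.sum_congr rfl (fun t _ => (key1 _).symm)
      _ = ∑ w : F2, ∑ t : F, χ⁻¹ w * ψ' ((1 + b * algebraMap F F2 t) * w) :=
          Finset.sum_comm
      _ = ∑ w : F2, (χ⁻¹ w * ψ' w) * (if tr (b * w) = 0 then (q : ℂ) else 0) := by
          refine Finset.sum_congr rfl (fun w _ => ?_)
          calc ∑ t : F, χ⁻¹ w * ψ' ((1 + b * algebraMap F F2 t) * w)
              = ∑ t : F, (χ⁻¹ w * ψ' w) * ψ (t * tr (b * w)) := by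
                refine Finset.sum_congr rfl (fun t _ => ?_)
                have hsplit : (1 + b * algebraMap F F2 t) * w
                    = w + algebraMap F F2 t * (b * w) := by ring
                rw [hsplit, AddChar.map_add_eq_mul, hψ'app, hψ'app, htrsmul]
                ring
            _ = (χ⁻¹ w * ψ' w) * ∑ t : F, ψ (t * tr (b * w)) := by
                rw [← Finset.mul_sum]
            _ = _ := by rw [horthF]
      _ = ∑ w : F2, (if tr (b * w) = 0 then (χ⁻¹ w * ψ' w) * (q : ℂ) else 0) := by
          refine Finset.sum_congr rfl (fun w _ => ?_)
          split_ifs <;> simp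
      _ = ∑ w ∈ Finset.univ.filter (fun w : F2 => tr (b * w) = 0),
            (χ⁻¹ w * ψ' w) * (q : ℂ) := (Finset.sum_filter _ _).symm
      _ = _ := by rw [← Finset.sum_mul, mul_comm]
  have hKeq : Finset.univ.filter (fun w : F2 => tr (b * w) = 0)
      = Finset.univ.image (fun c : F => algebraMap F F2 c * u₀) := by
    ext w
    simp only [Finset.mem_filter, Finset.mem_univ, true_and, Finset.mem_image]
    constructor
    · intro hw
      have h1 : b * w + (b * w) ^ q = 0 := by
        have h0 := htr (b * w)
        rw [hw, map_zero] at h0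
        exact h0.symm
      have h3 : (b * w) ^ q = -(b * w) := by linear_combination h1
      have h2 : (b * w * z₀⁻¹) ^ q = b * w * z₀⁻¹ := by
        rw [mul_pow, inv_pow, hz₀, h3]
        field_simp
      obtain ⟨c, hc⟩ := (hE _).mp h2
      refine ⟨c, ?_⟩
      rw [hc, hu₀def]
      field_simp
    · rintro ⟨c, rfl⟩
      have h1 : b * (algebraMap F F2 c * u₀) = algebraMap F F2 c * z₀ := by
        rw [hu₀def]
        field_simp
      rw [h1, htrsmul, htrz₀, mul_zero]
  have hstepB : ∑ w ∈ Finset.univ.filter (fun w : F2 => tr (b * w) = 0), χ⁻¹ w * ψ' w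
      = ∑ c : F, χ⁻¹ (algebraMap F F2 c * u₀) * ψ' (algebraMap F F2 c * u₀) := by
    rw [hKeq]
    rw [Finset.sum_image]
    intro x _ y _ hxy
    exact hinj (mul_right_cancel₀ hu₀ne hxy)
  have hstepC : ∑ c : F, χ⁻¹ (algebraMap F F2 c * u₀) * ψ' (algebraMap F F2 c * u₀)
      = χ⁻¹ u₀ * (ηC m * Gη) := by
    have hterm : ∀ c : F, χ⁻¹ (algebraMap F F2 c * u₀) * ψ' (algebraMap F F2 c * u₀)
        = χ⁻¹ u₀ * (ηC c * ψ (c * m)) := by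
      intro c
      have hc : χ⁻¹ (algebraMap F F2 c) = ηC c := by
        rcases eq_or_ne c 0 with rfl | hc
        · rw [map_zero, MulChar.map_zero, MulChar.map_zero]
        · rw [hχinv, ← map_inv₀, hχF, hηinv]
      rw [map_mul, hψ'app, htrsmul, ← hmdef, hc]
      ring
    rw [Finset.sum_congr rfl (fun c _ => hterm c), ← Finset.mul_sum]
    congr 1
    have h1 := gaussSum_mulShift ηC ψ (Units.mk0 m hm0)
    have h2 : gaussSum ηC (AddChar.mulShift ψ (Units.mk0 m hm0))
        = ∑ c : F, ηC c * ψ (c * m) := by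
      rw [gaussSum]
      refine Finset.sum_congr rfl (fun c _ => ?_)
      rw [AddChar.mulShift_apply, Units.val_mk0, mul_comm m c]
    rw [h2] at h1
    simp only [Units.val_mk0] at h1
    calc ∑ c : F, ηC c * ψ (c * m)
        = (ηC m * ηC m) * ∑ c : F, ηC c * ψ (c * m) := by rw [hη2 m hm0, one_mul]
      _ = ηC m * (ηC m * ∑ c : F, ηC c * ψ (c * m)) := by ring
      _ = ηC m * Gη := by rw [h1]
  have hr : χ⁻¹ u₀ * ηC m = χ (1 - b * (b ^ q)⁻¹) := by
    rw [← hχF m, hχinv, ← map_mul]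
    congr 1
    rw [hamm, hu₀def]
    field_simp
  have hmain2 : Gχi * L = (q : ℂ) * (χ (1 - b * (b ^ q)⁻¹) * Gη) := by
    rw [hstepA, hstepB, hstepC, ← mul_assoc (χ⁻¹ u₀), hr]
  -- ## the product of the two Gauss sums
  have hcardF2 : ((Fintype.card F2 : ℕ) : ℂ) = (q : ℂ) ^ 2 := by
    rw [hF2]
    push_cast
    ring
  have hGmul : Gχ * Gχi = χ (-1) * (q : ℂ) ^ 2 := by
    have h1 := gaussSum_mul_gaussSum_eq_card hχ1 hψ'prim
    have h2 := mul_gaussSum_inv_eq_gaussSum χ⁻¹ ψ'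
    have h3 : χ⁻¹ (-1 : F2) = χ (-1) := by
      rw [hχinv]
      congr 1
      norm_num
    calc Gχ * Gχi = Gχ * (χ⁻¹ (-1) * gaussSum χ⁻¹ ψ'⁻¹) := by rw [h2]
      _ = χ (-1) * (Gχ * gaussSum χ⁻¹ ψ'⁻¹) := by rw [h3]; ring
      _ = χ (-1) * (q : ℂ) ^ 2 := by rw [h1, hcardF2]
  have hχm1 : χ (-1 : F2) * χ (-1 : F2) = 1 := by
    rw [← map_mul, neg_mul_neg, one_mul, map_one]
  -- ## assembling the main evaluation
  have hLval : (q : ℂ) * (χ (-1) * L) = Gχ * Gη * χ (1 - b * (b ^ q)⁻¹) := by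
    have e1 : (Gχ * Gχi) * L = Gχ * ((q : ℂ) * (χ (1 - b * (b ^ q)⁻¹) * Gη)) := by
      rw [mul_assoc, hmain2]
    rw [hGmul] at e1
    have e2 : (q : ℂ) * ((q : ℂ) * (χ (-1) * L))
        = (q : ℂ) * (Gχ * Gη * χ (1 - b * (b ^ q)⁻¹)) := by
      linear_combination e1
    exact mul_left_cancel₀ hq0 e2
  set A : F2 := 1 + ((ω ^ ((q : ℤ) * ℓ) : F2ˣ) : F2) * sbar with hAdef
  have hA : A = Wq * b ^ q := by
    rw [hAdef, hWqdef, mul_comm ((q : ℤ)) ℓ, ← hWqdef, hbq, mul_add,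
      mul_inv_cancel₀ hWq0]
    ring
  have hA0 : A ≠ 0 := by rw [hA]; exact mul_ne_zero hWq0 hbq0
  have hfinalχ : χ⁻¹ A * χ (Wq - W) = χ (-1) * (χ W * χ (1 - b * (b ^ q)⁻¹)) := by
    rw [hχinv, ← map_mul, ← map_mul, ← map_mul]
    congr 1
    have hbb : b - b ^ q = W⁻¹ - Wq⁻¹ := by rw [hbq, hbdef]; ring
    have e : -1 * (W * (1 - b * (b ^ q)⁻¹)) = W * (b - b ^ q) * (b ^ q)⁻¹ := by
      field_simp
      ring
    calc A⁻¹ * (Wq - W) = (Wq * b ^ q)⁻¹ * (Wq - W) := by rw [hA]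
      _ = W * (W⁻¹ - Wq⁻¹) * (b ^ q)⁻¹ := by
          rw [mul_inv]
          field_simp
      _ = W * (b - b ^ q) * (b ^ q)⁻¹ := by rw [hbb]
      _ = -1 * (W * (1 - b * (b ^ q)⁻¹)) := e.symm
  have hclaim : χ W * L = Gχ * Gη / (q : ℂ) * (χ⁻¹ A * χ (Wq - W)) := by
    rw [hfinalχ]
    have e3 : (q : ℂ) * (χ W * L)
        = (q : ℂ) * (Gχ * Gη / (q : ℂ) * (χ (-1) * (χ W * χ (1 - b * (b ^ q)⁻¹)))) := by
      have e4 : (q : ℂ) * (Gχ * Gη / (q : ℂ) * (χ (-1) * (χ W * χ (1 - b * (b ^ q)⁻¹))))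
          = (Gχ * Gη * χ (1 - b * (b ^ q)⁻¹)) * (χ (-1) * χ W) := by
        field_simp
      rw [e4, ← hLval]
      linear_combination (-(q : ℂ) * L * χ W) * hχm1
    exact mul_left_cancel₀ hq0 e3
  -- ## reduction of the original sum to χ W * L - χ W
  have hLHS : ∑ x ∈ Finset.univ.erase s, χ (1 + W * algebraMap F F2 x) * quadChar F (x - s)
      = χ W * L - χ W := by
    have h2 : ∑ u : F, χ (1 + W * algebraMap F F2 (u + s)) * quadChar F u
        = ∑ x : F, χ (1 + W * algebraMap F F2 x) * quadChar F (x - s) := by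
      refine Fintype.sum_bijective (fun u : F => u + s) (Equiv.addRight s).bijective _ _
        (fun u => ?_)
      rw [add_sub_cancel_right]
    have h3 : ∀ u : F, χ (1 + W * algebraMap F F2 (u + s)) * quadChar F u
        = χ W * (χ (algebraMap F F2 u + b) * ηC u) := by
      intro u
      have harg : 1 + W * algebraMap F F2 (u + s) = W * (algebraMap F F2 u + b) := by
        rw [hbdef, hsbar, map_add]
        have hWW : W * W⁻¹ = 1 := mul_inv_cancel₀ hW0
        linear_combination -hWW
      rw [hquad, harg, map_mul]
      ring
    have h41 : ∀ u : F, u ≠ 0 → χ (algebraMap F F2 u + b) * ηC u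
        = χ (1 + b * algebraMap F F2 u⁻¹) := by
      intro u hu
      have hau : algebraMap F F2 u ≠ 0 := fun h => hu (hinj (by rw [h, map_zero]))
      have harg : (algebraMap F F2 u + b) * algebraMap F F2 u
          = algebraMap F F2 (u * u) * (1 + b * algebraMap F F2 u⁻¹) := by
        rw [map_mul, map_inv₀]
        field_simp
      have hsq : ηC (u * u) = 1 := by rw [map_mul]; exact hη2 u hu
      calc χ (algebraMap F F2 u + b) * ηC u
          = χ (algebraMap F F2 u + b) * χ (algebraMap F F2 u) := by rw [hχF]
        _ = χ ((algebraMap F F2 u + b) * algebraMap F F2 u) := (map_mul χ _ _).symm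
        _ = χ (algebraMap F F2 (u * u)) * χ (1 + b * algebraMap F F2 u⁻¹) := by
            rw [harg, map_mul]
        _ = χ (1 + b * algebraMap F F2 u⁻¹) := by rw [hχF, hsq, one_mul]
    have h40 : ∑ u : F, χ (algebraMap F F2 u + b) * ηC u
        = ∑ u ∈ Finset.univ.erase 0, χ (algebraMap F F2 u + b) * ηC u := by
      refine (Finset.sum_erase _ ?_).symm
      rw [MulChar.map_zero, mul_zero]
    have h42 : ∑ u ∈ Finset.univ.erase 0, χ (1 + b * algebraMap F F2 u⁻¹)
        = ∑ t ∈ Finset.univ.erase 0, χ (1 + b * algebraMap F F2 t) := by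
      refine Finset.sum_nbij' (fun u => u⁻¹) (fun t => t⁻¹) ?_ ?_ ?_ ?_ ?_
      · intro a ha
        simp only [Finset.mem_erase, Finset.mem_univ, and_true] at ha ⊢
        exact inv_ne_zero ha
      · intro a ha
        simp only [Finset.mem_erase, Finset.mem_univ, and_true] at ha ⊢
        exact inv_ne_zero ha
      · intro a _
        exact inv_inv a
      · intro a _
        exact inv_inv a
      · intro a _
        rfl
    have h43 : ∑ t ∈ Finset.univ.erase 0, χ (1 + b * algebraMap F F2 t) = L - 1 := by
      have h5 := Finset.add_sum_erase Finset.univ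
        (fun t : F => χ (1 + b * algebraMap F F2 t)) (Finset.mem_univ 0)
      simp only [map_zero, mul_zero, add_zero, map_one] at h5
      rw [hLdef]
      linear_combination h5
    have h4 : ∑ u : F, χ (algebraMap F F2 u + b) * ηC u = L - 1 := by
      rw [h40, Finset.sum_congr rfl (fun u hu => h41 u (Finset.ne_of_mem_erase hu)),
        h42, h43]
    calc ∑ x ∈ Finset.univ.erase s, χ (1 + W * algebraMap F F2 x) * quadChar F (x - s)
        = ∑ x : F, χ (1 + W * algebraMap F F2 x) * quadChar F (x - s) :=
          Finset.sum_erase _ (by simp [quadChar])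
      _ = ∑ u : F, χ (1 + W * algebraMap F F2 (u + s)) * quadChar F u := h2.symm
      _ = ∑ u : F, χ W * (χ (algebraMap F F2 u + b) * ηC u) :=
          Finset.sum_congr rfl (fun u _ => h3 u)
      _ = χ W * (L - 1) := by rw [← Finset.mul_sum, h4]
      _ = χ W * L - χ W := by ring
  -- ## conclusion
  have hsum1 : (∑ y : F2, χ y * ψ (tr y)) = Gχ := by
    rw [hGχ, gaussSum]
    exact Finset.sum_congr rfl (fun y _ => by rw [hψ'app])
  have hsum2 : (∑ x : F, quadChar F x * ψ x) = Gη := by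
    rw [hGη, gaussSum]
    exact Finset.sum_congr rfl (fun x _ => by rw [hquad])
  rw [hsum1, hsum2, hLHS, hclaim]
  ring
end
end

section
/- Let q be an odd prime power, e an even divisor of q²−1, and χ_e a multiplicative character of F_{q²} with χ_e(ω) = ζ_e := exp(2πi/e) whose restriction to F_q^× equals the quadratic character η of F_q. Let ℓ be an integer not divisible by q+1, and let H be a subset of {0,1,…,e−1} of size e/2 containing exactly one element of each residue class modulo e/2. Then, as an identity in ℂ, |D_{ℓ,H}| = q/2 + χ_e(−1)·G_q(η)/(2q) + (χ_e(−1)·G_q(η)/q) · ∑_{j∈H} ψ'(ω^{qℓ}·(ω^{ℓq} − ω^{ℓ})^{−1}·C_j^{(e,q²)}). -/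
noncomputable section

open Complex

open scoped Classical

/-- The `i`-th cyclotomic class `C_i^{(e,q²)} = ω^i ⟨ω^e⟩` of order `e`. -/
def cyc {F2 : Type*} [Field F2] (ω : F2ˣ) (e : ℕ) (i : ℤ) : Set F2 :=
  {x | ∃ k : ℤ, x = ((ω ^ (i + (e : ℤ) * k) : F2ˣ) : F2)}

set_option maxHeartbeats 2000000 in
/-- the size of `D_{ℓ,H}` expressed via character sums over cyclotomic
classes (Proposition 3.4 of the paper). -/
theorem stmt_6 (q e : ℕ) (hq : IsPrimePow q) (hqodd : Odd q)
    (he : e ∣ q ^ 2 - 1) (heven : Even e)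
    (F F2 : Type) [Field F] [Fintype F] [Field F2] [Fintype F2] [Algebra F F2]
    (hF : Fintype.card F = q) (hF2 : Fintype.card F2 = q ^ 2)
    (ω : F2ˣ) (hω : ∀ x : F2ˣ, x ∈ Subgroup.zpowers ω)
    (ψ : AddChar F ℂ) (hψ : ∃ a, ψ a ≠ 1)
    (tr : F2 → F) (htr : ∀ x : F2, algebraMap F F2 (tr x) = x + x ^ q)
    (χ : MulChar F2 ℂ)
    (hχω : χ (ω : F2) = Complex.exp (2 * Real.pi * Complex.I / e))
    (hχη : ∀ x : F, x ≠ 0 → χ (algebraMap F F2 x) = quadChar F x)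
    (ℓ : ℤ) (hℓ : ¬ ((q : ℤ) + 1 ∣ ℓ))
    (H : Finset ℕ) (hHsub : H ⊆ Finset.range e) (hHcard : H.card = e / 2)
    (hHres : ∀ r < e / 2, ∃! j, j ∈ H ∧ j % (e / 2) = r)
    (D : Set F)
    (hD : D = {x : F | ∃ i ∈ H, (1 + algebraMap F F2 x * ((ω ^ ℓ : F2ˣ) : F2)) ∈ cyc ω e (i : ℤ)}) :
    (D.ncard : ℂ) =
      (q : ℂ) / 2 + χ (-1) * (∑ x : F, quadChar F x * ψ x) / (2 * q) +
        (χ (-1) * (∑ x : F, quadChar F x * ψ x) / q) *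
          ∑ j ∈ H, ∑ᶠ y ∈ cyc ω e (j : ℤ),
            ψ (tr (((ω ^ ((q : ℤ) * ℓ) : F2ˣ) : F2) *
              (((ω ^ (ℓ * (q : ℤ)) : F2ˣ) : F2) - ((ω ^ ℓ : F2ˣ) : F2))⁻¹ * y)) := by
  classical
  -- ## basic numerology
  have hq1 : 1 ≤ q := hq.one_lt.le.trans' (by norm_num)
  have hq3 : 3 ≤ q := by
    have h1 := hq.one_lt
    have h2 : q ≠ 2 := by
      rintro rfl
      exact absurd hqodd (by decide)
    omega
  have hqZ1 : (1:ℤ) ≤ q := by exact_mod_cast hq1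
  have hq2sub : 1 ≤ q ^ 2 := Nat.one_le_pow _ _ (by omega)
  have hNZ : ((q ^ 2 - 1 : ℕ) : ℤ) = (q:ℤ)^2 - 1 := by push_cast [Nat.cast_sub hq2sub]; ring
  have h9 : 3 ^ 2 ≤ q ^ 2 := Nat.pow_le_pow_left hq3 2
  have he0 : e ≠ 0 := by
    rintro rfl
    rw [Nat.zero_dvd] at he
    omega
  haveI : NeZero e := ⟨he0⟩
  have he2 : e / 2 + e / 2 = e := by
    obtain ⟨m, hm⟩ := heven; omega
  have he2pos : 0 < e / 2 := by omega
  have heZ : (e : ℤ) ∣ (q:ℤ)^2 - 1 := by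
    rw [← hNZ]; exact_mod_cast Int.natCast_dvd_natCast.mpr he
  -- ## discrete logarithm and classes
  have hord : orderOf ω = q ^ 2 - 1 := by
    have h := orderOf_eq_card_of_forall_mem_zpowers hω
    rw [Nat.card_eq_fintype_card, Fintype.card_units, hF2] at h
    exact h
  have hpow_iff : ∀ a b : ℤ, ω ^ a = ω ^ b ↔ ((q:ℤ)^2 - 1) ∣ (b - a) := by
    intro a b
    rw [zpow_eq_zpow_iff_modEq, hord, Int.modEq_iff_dvd, hNZ]
  choose lg hlg using fun x : F2ˣ => Subgroup.mem_zpowers_iff.mp (hω x)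
  set cls : F2ˣ → ZMod e := fun x => ((lg x : ℤ) : ZMod e) with hclsdef
  have hωcong : ∀ a b : ℤ, ω ^ a = ω ^ b → ((a : ZMod e) = (b : ZMod e)) := by
    intro a b h
    have h1 := (hpow_iff a b).1 h
    have h2 : (e:ℤ) ∣ b - a := heZ.trans h1
    exact (ZMod.intCast_eq_intCast_iff _ _ _).2 (Int.modEq_iff_dvd.mpr h2)
  have hcls : ∀ (x : F2ˣ) (a : ℤ), ω ^ a = x → cls x = (a : ZMod e) := by
    intro x a h
    exact hωcong (lg x) a (by rw [hlg x, ← h])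
  have hmem : ∀ (x : F2ˣ) (i : ℤ), ((x:F2) ∈ cyc ω e i) ↔ cls x = (i : ZMod e) := by
    intro x i
    constructor
    · rintro ⟨k, hk⟩
      have hx : ω ^ (i + (e:ℤ) * k) = x := Units.ext hk.symm
      rw [hcls x _ hx]
      push_cast [ZMod.natCast_self]
      ring
    · intro h
      obtain ⟨k, hk⟩ := Int.ModEq.dvd ((ZMod.intCast_eq_intCast_iff _ _ _).1 h)
      refine ⟨-k, ?_⟩
      have hx : ω ^ (i + (e:ℤ) * (-k)) = x := by
        rw [← hlg x]
        congr 1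
        linarith
      exact (congrArg Units.val hx).symm
  -- ## Frobenius-fixed elements come from F
  have hinj : Function.Injective (algebraMap F F2) := RingHom.injective _
  have hfrob : ∀ z : F2, z ^ q = z → ∃ u : F, algebraMap F F2 u = z := by
    intro z hz
    have hSR : Finset.univ.image (algebraMap F F2) ⊆
        Finset.univ.filter (fun z : F2 => z ^ q = z) := by
      intro w hw
      simp only [Finset.mem_image] at hw
      obtain ⟨u, -, rfl⟩ := hw
      simp only [Finset.mem_filter, Finset.mem_univ, true_and]
      rw [← map_pow]
      congr 1
      calc u ^ q = u ^ Fintype.card F := by rw [hF]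
        _ = u := FiniteField.pow_card u
    have hcardS : (Finset.univ.image (algebraMap F F2)).card = q := by
      rw [Finset.card_image_of_injective _ hinj, Finset.card_univ, hF]
    have hcardR : (Finset.univ.filter (fun z : F2 => z ^ q = z)).card ≤ q := by
      set P : Polynomial F2 := Polynomial.X ^ q - Polynomial.X with hP
      have hPc : P.coeff q = 1 := by
        rw [hP, Polynomial.coeff_sub, Polynomial.coeff_X_pow, Polynomial.coeff_X,
          if_pos rfl, if_neg (by omega : ¬ (1 = q))]
        ring
      have hPne : P ≠ 0 := fun h => by simp [h] at hPc
      have hsub : (Finset.univ.filter (fun z : F2 => z ^ q = z)) ⊆ P.roots.toFinset := by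
        intro w hw
        simp only [Finset.mem_filter, Finset.mem_univ, true_and] at hw
        rw [Multiset.mem_toFinset, Polynomial.mem_roots hPne]
        simp [Polynomial.IsRoot, hP, hw, sub_eq_zero]
      calc (Finset.univ.filter (fun z : F2 => z ^ q = z)).card
          ≤ P.roots.toFinset.card := Finset.card_le_card hsub
        _ ≤ Multiset.card P.roots := P.roots.toFinset_card_le
        _ ≤ P.natDegree := Polynomial.card_roots' P
        _ ≤ q := by
            refine le_trans (Polynomial.natDegree_sub_le _ _) ?_
            simp only [Polynomial.natDegree_X_pow, Polynomial.natDegree_X]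
            omega
    have hEq := Finset.eq_of_subset_of_card_le hSR (by rw [hcardS]; exact hcardR)
    have hzmem : z ∈ Finset.univ.image (algebraMap F F2) := by
      rw [hEq]; simp [hz]
    simpa using Finset.mem_image.1 hzmem
  -- ## the coefficient (q+1) ≡ e/2 (mod e)
  have hdiv : ∀ x : F2ˣ, (x:F2) ^ (q - 1) = 1 → ((q:ℤ) + 1) ∣ lg x := by
    intro x hx
    have hx' : x ^ ((q - 1 : ℕ) : ℤ) = 1 := by
      rw [zpow_natCast]
      exact Units.ext (by rw [Units.val_pow_eq_pow_val, hx, Units.val_one])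
    have h1 : ω ^ ((lg x) * ((q - 1 : ℕ) : ℤ)) = ω ^ (0:ℤ) := by
      rw [zpow_zero, zpow_mul, hlg x, hx']
    have h2 := (hpow_iff _ _).1 h1
    rw [zero_sub, dvd_neg] at h2
    have hcast : ((q - 1 : ℕ) : ℤ) = (q:ℤ) - 1 := by omega
    rw [hcast] at h2
    have h3 : ((q:ℤ) + 1) * ((q:ℤ) - 1) ∣ (lg x) * ((q:ℤ) - 1) := by
      obtain ⟨t, ht⟩ := h2
      exact ⟨t, by linear_combination ht⟩
    have hne : (q:ℤ) - 1 ≠ 0 := by omega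
    exact (mul_dvd_mul_iff_right hne).1 h3
  have hfromF : ∀ (v : F), v ≠ 0 → ∀ (x : F2ˣ), algebraMap F F2 v = ↑x → ((q:ℤ)+1) ∣ lg x := by
    intro v hv x hx
    apply hdiv
    rw [← hx, ← map_pow]
    have h1 : v ^ (q - 1) = 1 := by
      have h2 := FiniteField.pow_card_sub_one_eq_one v hv
      rwa [hF] at h2
    rw [h1, map_one]
  have hζ : IsPrimitiveRoot (Complex.exp (2 * Real.pi * Complex.I / e)) e :=
    Complex.isPrimitiveRoot_exp e he0
  have heC : ((e:ℂ)) ≠ 0 := by exact_mod_cast he0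
  have hζhalf : Complex.exp (2 * Real.pi * Complex.I / e) ^ (e/2 : ℕ) = -1 := by
    rw [← Complex.exp_nat_mul]
    have h2 : ((e/2 : ℕ) : ℂ) * 2 = (e : ℂ) := by
      exact_mod_cast congrArg (fun m : ℕ => (m : ℂ)) (by omega : (e/2) * 2 = e)
    have harg : (e/2 : ℕ) * (2 * Real.pi * Complex.I / e) = Real.pi * Complex.I := by
      field_simp
      linear_combination h2
    rw [harg, Complex.exp_pi_mul_I]
  -- ω^(q+1) is Frobenius-fixed, hence comes from a nonsquare of F
  have hfixUq : ((ω ^ ((q:ℤ)+1) : F2ˣ) : F2) ^ q = ((ω ^ ((q:ℤ)+1) : F2ˣ) : F2) := by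
    have hu : (ω ^ ((q:ℤ)+1)) ^ (q:ℕ) = ω ^ ((q:ℤ)+1) := by
      rw [← zpow_natCast (ω ^ ((q:ℤ)+1)) q, ← zpow_mul]
      exact (hpow_iff _ _).2 ⟨-1, by ring⟩
    rw [← Units.val_pow_eq_pow_val, hu]
  obtain ⟨u₀, hu₀⟩ := hfrob _ hfixUq
  have hu₀ne : u₀ ≠ 0 := by
    rintro rfl
    rw [map_zero] at hu₀
    exact (Units.ne_zero _) hu₀.symm
  have hnotsq : ¬ IsSquare u₀ := by
    rintro ⟨v, hvv⟩
    have hv : v ≠ 0 := by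
      rintro rfl
      rw [mul_zero] at hvv
      exact hu₀ne hvv
    have hvne : algebraMap F F2 v ≠ 0 := fun h => hv (hinj (by rw [h, map_zero]))
    set xv : F2ˣ := Units.mk0 (algebraMap F F2 v) hvne with hxv
    obtain ⟨s, hs⟩ := hfromF v hv xv rfl
    have hUxv : ω ^ ((q:ℤ)+1) = xv * xv := by
      apply Units.ext
      rw [Units.val_mul, ← hu₀, hvv, map_mul]
      rfl
    have h1 : ω ^ ((q:ℤ)+1) = ω ^ (lg xv + lg xv) := by
      rw [hUxv, zpow_add, hlg xv]
    have h2 := (hpow_iff _ _).1 h1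
    rw [hs] at h2
    have h3 : ((q:ℤ)+1) * ((q:ℤ)-1) ∣ ((q:ℤ)+1) * (2*s-1) := by
      obtain ⟨t, ht⟩ := h2
      exact ⟨t, by linear_combination ht⟩
    have h4 : ((q:ℤ)-1) ∣ (2*s-1) :=
      (mul_dvd_mul_iff_left (by omega : ((q:ℤ)+1) ≠ 0)).1 h3
    obtain ⟨m, hmq⟩ := hqodd
    have h5 : (2:ℤ) ∣ (2*s - 1) :=
      dvd_trans ⟨m, by exact_mod_cast (by omega : (q:ℤ) - 1 = 2 * (m:ℤ))⟩ h4
    omega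
  have hζq1 : Complex.exp (2 * Real.pi * Complex.I / e) ^ (q + 1 : ℕ) = -1 := by
    have hUc : ((ω ^ ((q:ℤ)+1) : F2ˣ) : F2) = ((ω : F2)) ^ (q+1 : ℕ) := by
      rw [show ((q:ℤ)+1) = ((q+1 : ℕ) : ℤ) by omega, zpow_natCast,
        Units.val_pow_eq_pow_val]
    have h1 : χ (((ω ^ ((q:ℤ)+1) : F2ˣ) : F2)) = Complex.exp (2 * Real.pi * Complex.I / e) ^ (q + 1 : ℕ) := by
      rw [hUc, map_pow, hχω]
    have h2 : χ (((ω ^ ((q:ℤ)+1) : F2ˣ) : F2)) = quadChar F u₀ := by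
      rw [← hu₀]
      exact hχη u₀ hu₀ne
    have h3 : quadChar F u₀ = -1 := by
      rw [quadChar, if_neg hu₀ne, if_neg hnotsq]
    rw [← h1, h2, h3]
  have hzeta0 : Complex.exp (2*Real.pi*Complex.I/e) ≠ 0 := Complex.exp_ne_zero _
  have hq1e : (((q:ℤ) + 1 : ℤ) : ZMod e) = ((e/2 : ℕ) : ZMod e) := by
    have hdvd0 : (e:ℤ) ∣ ((q+1 : ℕ) : ℤ) - ((e/2 : ℕ) : ℤ) := by
      apply (hζ.zpow_eq_one_iff_dvd _).1
      have h1 : Complex.exp (2 * Real.pi * Complex.I / e) ^ (((q+1 : ℕ) : ℤ) - ((e/2 : ℕ) : ℤ))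
          = Complex.exp (2 * Real.pi * Complex.I / e) ^ ((q+1 : ℕ) : ℤ) *
            (Complex.exp (2 * Real.pi * Complex.I / e) ^ ((e/2 : ℕ) : ℤ))⁻¹ := by
        rw [zpow_sub₀ hzeta0, div_eq_mul_inv]
      rw [h1, zpow_natCast, zpow_natCast, hζq1, hζhalf]
      norm_num
    have hdvd : (e:ℤ) ∣ ((e/2 : ℕ) : ℤ) - ((q:ℤ)+1) := by
      obtain ⟨k, hk⟩ := hdvd0
      exact ⟨-k, by push_cast at hk ⊢; linarith⟩
    have h2 := (ZMod.intCast_eq_intCast_iff ((q:ℤ)+1) ((e/2:ℕ):ℤ) e).2 (Int.modEq_iff_dvd.mpr hdvd)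
    exact h2.trans (Int.cast_natCast _)
  have h2e : ((e/2 : ℕ) : ZMod e) + ((e/2 : ℕ) : ZMod e) = 0 := by
    rw [← Nat.cast_add, he2, ZMod.natCast_self]
  have hq1e' : ((q : ZMod e) + 1) = ((e/2 : ℕ) : ZMod e) := by exact_mod_cast hq1e
  -- ## claim C : classes of elements of F
  have hC : ∀ (u : F), u ≠ 0 → ∀ (x : F2ˣ), algebraMap F F2 u = ↑x →
      cls x = (if IsSquare u then 0 else ((e/2 : ℕ) : ZMod e)) := by
    intro u hu x hx
    obtain ⟨m, hm⟩ := hfromF u hu x hx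
    have hclsx : cls x = ((((q:ℤ)+1) * m : ℤ) : ZMod e) := by
      apply hcls
      rw [← hm]
      exact hlg x
    by_cases hsq : IsSquare u
    · rw [if_pos hsq]
      obtain ⟨v, hvv⟩ := hsq
      have hv : v ≠ 0 := by
        rintro rfl
        rw [mul_zero] at hvv
        exact hu hvv
      have hvne : algebraMap F F2 v ≠ 0 := fun h => hv (hinj (by rw [h, map_zero]))
      set xv : F2ˣ := Units.mk0 (algebraMap F F2 v) hvne with hxv
      obtain ⟨s, hs⟩ := hfromF v hv xv rfl
      have hxxv : x = xv * xv := by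
        apply Units.ext
        rw [Units.val_mul, ← hx, hvv, map_mul]
        rfl
      have h1 : cls x = (((lg xv + lg xv : ℤ)) : ZMod e) := by
        apply hcls
        rw [zpow_add, hlg xv, ← hxxv]
      rw [h1, hs]
      push_cast
      linear_combination (2*(s:ZMod e)) * hq1e' + (s:ZMod e) * h2e
    · rw [if_neg hsq]
      rcases Int.even_or_odd m with hm2 | hm2
      · exfalso
        obtain ⟨s, hss⟩ := hm2
        have hfix : ((ω ^ (((q:ℤ)+1) * s) : F2ˣ) : F2) ^ q = ((ω ^ (((q:ℤ)+1) * s) : F2ˣ) : F2) := by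
          have hu' : (ω ^ (((q:ℤ)+1)*s)) ^ (q:ℕ) = ω ^ (((q:ℤ)+1)*s) := by
            rw [← zpow_natCast (ω ^ (((q:ℤ)+1)*s)) q, ← zpow_mul]
            exact (hpow_iff _ _).2 ⟨-s, by ring⟩
          rw [← Units.val_pow_eq_pow_val, hu']
        obtain ⟨w, hw⟩ := hfrob _ hfix
        apply hsq
        refine ⟨w, hinj ?_⟩
        rw [hx, map_mul, hw]
        have : x = (ω ^ (((q:ℤ)+1) * s)) * (ω ^ (((q:ℤ)+1) * s)) := by
          rw [← zpow_add, ← hlg x, hm, hss]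
          congr 1
          ring
        rw [this, Units.val_mul]
      · obtain ⟨s, hss⟩ := hm2
        rw [hclsx, hss]
        push_cast
        linear_combination (2*(s:ZMod e)+1) * hq1e' + (s:ZMod e) * h2e
  -- ## the set Hbar and the flip property
  set Hb : Finset (ZMod e) := H.image (fun j : ℕ => (j : ZMod e)) with hHb
  have hmemH : ∀ (b : ZMod e), (b ∈ Hb ↔ b.val ∈ H) := by
    intro b
    constructor
    · intro hb
      obtain ⟨j, hjH, hj⟩ := Finset.mem_image.1 hb
      have hjlt : j < e := Finset.mem_range.1 (hHsub hjH)
      have hjv : (j : ZMod e).val = j := ZMod.val_cast_of_lt hjlt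
      rw [← hj, hjv]
      exact hjH
    · intro hb
      exact Finset.mem_image.2 ⟨b.val, hb, by rw [ZMod.natCast_val, ZMod.cast_id]⟩
  have hflip : ∀ a : ZMod e, ((a + ((e/2:ℕ) : ZMod e)) ∈ Hb) ↔ ¬ (a ∈ Hb) := by
    intro a
    set nn := a.val with hnn
    have hnlt : nn < e := ZMod.val_lt a
    have hval2 : ((e/2:ℕ) : ZMod e).val = e/2 := ZMod.val_cast_of_lt (by omega)
    have hnn' : (a + ((e/2:ℕ) : ZMod e)).val = (nn + e/2) % e := by
      rw [ZMod.val_add, hval2, ← hnn]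
    set nn' := (a + ((e/2:ℕ) : ZMod e)).val with hnn'def
    have hnn'val : nn' = if nn < e/2 then nn + e/2 else nn - e/2 := by
      rw [hnn']
      by_cases hcase : nn < e/2
      · rw [if_pos hcase, Nat.mod_eq_of_lt (by omega)]
      · rw [if_neg hcase, show nn + e/2 = (nn - e/2) + e by omega, Nat.add_mod_right,
          Nat.mod_eq_of_lt (by omega)]
    obtain ⟨j, ⟨hjH, hjr⟩, hjuniq⟩ := hHres (nn % (e/2)) (Nat.mod_lt _ he2pos)
    have htwo : ∀ m : ℕ, m < e → m % (e/2) = nn % (e/2) → m = nn ∨ m = nn' := by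
      intro m hm hr
      obtain ⟨a, ha⟩ : ∃ a, m = (e/2) * a + m % (e/2) :=
        ⟨m / (e/2), (Nat.div_add_mod m (e/2)).symm⟩
      obtain ⟨b, hb⟩ : ∃ b, nn = (e/2) * b + nn % (e/2) :=
        ⟨nn / (e/2), (Nat.div_add_mod nn (e/2)).symm⟩
      have hmod : m % (e/2) < e/2 := Nat.mod_lt _ he2pos
      have ha2 : a < 2 := by
        by_contra hcon
        have h2' : (e/2) * 2 ≤ (e/2) * a := Nat.mul_le_mul_left _ (by omega)
        omega
      have hb2 : b < 2 := by
        by_contra hcon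
        have h2' : (e/2) * 2 ≤ (e/2) * b := Nat.mul_le_mul_left _ (by omega)
        omega
      rw [hnn'val]
      interval_cases a <;> interval_cases b <;> split_ifs <;> omega
    have hjlt : j < e := Finset.mem_range.1 (hHsub hjH)
    have hjcase := htwo j hjlt hjr
    have hnn'r : nn' % (e/2) = nn % (e/2) := by
      rw [hnn'val]
      split_ifs with hcase
      · rw [Nat.add_mod_right]
      · conv_rhs => rw [show nn = (nn - e/2) + (e/2) by omega]
        rw [Nat.add_mod_right]
    have hne : nn' ≠ nn := by
      rw [hnn'val]; split_ifs <;> omega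
    rw [hmemH, hmemH, ← hnn, ← hnn'def]
    constructor
    · intro h1 h2
      have e1 := hjuniq nn' ⟨h1, hnn'r⟩
      have e2 := hjuniq nn ⟨h2, rfl⟩
      exact hne (e1.trans e2.symm)
    · intro h1
      rcases hjcase with h|h
      · exact absurd (h ▸ hjH) h1
      · exact h ▸ hjH
  -- ## characteristic
  obtain ⟨p, nexp, hpp, hnpos, hqeq⟩ := hq
  haveI hpfact : Fact p.Prime := ⟨hpp.nat_prime⟩
  haveI hrF2 : CharP F2 (ringChar F2) := ringChar.charP F2
  obtain ⟨m, hrp, hcard⟩ := FiniteField.card F2 (ringChar F2)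
  have hpr : p = ringChar F2 := by
    have h1 : p ∣ ringChar F2 ^ (m:ℕ) := by
      rw [← hcard, hF2, ← hqeq, ← pow_mul]
      exact dvd_pow_self p (by positivity)
    have h2 : p ∣ ringChar F2 := hpp.nat_prime.dvd_of_dvd_pow h1
    exact (Nat.prime_dvd_prime_iff_eq hpp.nat_prime hrp).1 h2
  haveI hchar : CharP F2 p := hpr ▸ hrF2
  have hfq : ∀ a b : F2, (a + b) ^ q = a ^ q + b ^ q := by
    intro a b
    rw [← hqeq]
    exact add_pow_char_pow a b p nexp
  have halgq : ∀ u : F, (algebraMap F F2 u) ^ q = algebraMap F F2 u := by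
    intro u
    rw [← map_pow]
    congr 1
    calc u ^ q = u ^ Fintype.card F := by rw [hF]
      _ = u := FiniteField.pow_card u
  -- ## the element d and trace facts
  set B : F2 := ((ω ^ ℓ : F2ˣ) : F2) with hBdef
  set A : F2 := ((ω ^ ((q:ℤ) * ℓ) : F2ˣ) : F2) with hAdef
  have hAB : A ≠ B := by
    intro h
    have hu : ω ^ ((q:ℤ) * ℓ) = ω ^ ℓ := Units.ext h
    have h2 := (hpow_iff _ _).1 hu
    apply hℓ
    have h3 : ((q:ℤ)+1) * ((q:ℤ)-1) ∣ ℓ * ((q:ℤ)-1) := by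
      obtain ⟨t, ht⟩ := h2
      exact ⟨-t, by linear_combination -ht⟩
    exact (mul_dvd_mul_iff_right (by omega : (q:ℤ)-1 ≠ 0)).1 h3
  have hBne : B ≠ 0 := Units.ne_zero _
  have hAne : A ≠ 0 := Units.ne_zero _
  have hbne : A - B ≠ 0 := sub_ne_zero.mpr hAB
  set d : F2 := A * (A - B)⁻¹ with hddef
  have hdne : d ≠ 0 := mul_ne_zero hAne (inv_ne_zero hbne)
  have hAq : A ^ q = B := by
    rw [hAdef, hBdef, ← Units.val_pow_eq_pow_val]
    congr 1
    rw [← zpow_natCast (ω ^ ((q:ℤ)*ℓ)) q, ← zpow_mul]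
    exact (hpow_iff _ _).2 ⟨-ℓ, by ring⟩
  have hBq : B ^ q = A := by
    rw [hBdef, hAdef, ← Units.val_pow_eq_pow_val]
    congr 1
    rw [← zpow_natCast (ω ^ ℓ) q, ← zpow_mul]
    exact (hpow_iff _ _).2 ⟨0, by ring⟩
  have hbq : (A - B) ^ q = -(A - B) := by
    rw [sub_eq_add_neg, hfq, hqodd.neg_pow, hAq, hBq]
    ring
  have hdq : d ^ q = - (B * (A - B)⁻¹) := by
    rw [hddef, mul_pow, hAq, inv_pow, hbq, inv_neg]
    ring
  have htrd : tr d = 1 := by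
    apply hinj
    rw [htr, map_one, hdq, hddef]
    have h1 : A * (A-B)⁻¹ + -(B * (A-B)⁻¹) = (A - B) * (A-B)⁻¹ := by ring
    rw [h1, mul_inv_cancel₀ hbne]
  have htradd : ∀ a b : F2, tr (a + b) = tr a + tr b := by
    intro a b
    apply hinj
    rw [map_add, htr, htr, htr, hfq]
    ring
  have htrsmul : ∀ (u : F) (z : F2), tr (algebraMap F F2 u * z) = u * tr z := by
    intro u z
    apply hinj
    rw [htr, map_mul, htr, mul_pow, halgq]
    ring
  have htr0 : tr 0 = 0 := by
    apply hinj
    rw [htr, map_zero, zero_pow (by omega : q ≠ 0), add_zero]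
  have htrdB : ∀ x : F, tr (d * (algebraMap F F2 x * B)) = 0 := by
    intro x
    apply hinj
    rw [htr, map_zero, mul_pow, hdq, mul_pow, halgq, hBq, hddef]
    ring
  -- ## the map Y
  have hy0 : ∀ x : F, (1 + algebraMap F F2 x * B) ≠ 0 := by
    intro x h
    by_cases hx : x = 0
    · rw [hx, map_zero, zero_mul, add_zero] at h
      exact one_ne_zero h
    · have hxne : algebraMap F F2 x ≠ 0 := fun hh => hx (hinj (by rw [hh, map_zero]))
      have h1 : algebraMap F F2 x * B = -1 := by linear_combination h
      have hBx : B = algebraMap F F2 (-x⁻¹) := by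
        apply mul_left_cancel₀ hxne
        rw [map_neg, map_inv₀, mul_neg, mul_inv_cancel₀ hxne]
        exact h1
      have hfix : B ^ q = B := by rw [hBx]; exact halgq _
      rw [hBq] at hfix
      exact hAB hfix
  set Y : F → F2ˣ := fun x => Units.mk0 _ (hy0 x) with hYdef
  -- ## counting D
  have hDmem : ∀ x : F, x ∈ D ↔ cls (Y x) ∈ Hb := by
    intro x
    rw [hD]
    simp only [Set.mem_setOf_eq]
    constructor
    · rintro ⟨i, hiH, hicyc⟩
      have h1 : ((Y x : F2)) ∈ cyc ω e (i:ℤ) := hicyc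
      rw [hmem] at h1
      exact Finset.mem_image.2 ⟨i, hiH, by rw [h1]; exact (Int.cast_natCast i).symm⟩
    · intro hmemb
      obtain ⟨i, hiH, hi⟩ := Finset.mem_image.1 hmemb
      refine ⟨i, hiH, ?_⟩
      show ((Y x : F2)) ∈ cyc ω e (i:ℤ)
      rw [hmem, Int.cast_natCast]
      exact hi.symm
  set gg : F2ˣ → ℂ := fun x => if cls x ∈ Hb then 1 else -1 with hggdef
  set GG : F2 → ℂ := fun z => if hz : z = 0 then 0 else gg (Units.mk0 z hz) with hGGdef
  set S : ℂ := ∑ x : F, gg (Y x) with hSdef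
  have step14 : (D.ncard : ℂ) = q/2 + (1/2) * S := by
    have hDfin : D = ↑(Finset.univ.filter (fun x : F => cls (Y x) ∈ Hb)) := by
      ext x
      rw [Finset.coe_filter]
      simp only [Set.mem_setOf_eq, Finset.mem_univ, true_and]
      exact hDmem x
    have hpt : ∀ x : F, (if cls (Y x) ∈ Hb then (1:ℂ) else 0) = 1/2 + (1/2) * gg (Y x) := by
      intro x
      by_cases hc : cls (Y x) ∈ Hb
      · rw [if_pos hc, hggdef]
        simp only [if_pos hc]
        norm_num
      · rw [if_neg hc, hggdef]
        simp only [if_neg hc]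
        norm_num
    rw [hDfin, Set.ncard_coe_finset, ← Finset.sum_boole,
      Finset.sum_congr rfl (fun x _ => hpt x), Finset.sum_add_distrib, Finset.sum_const,
      Finset.card_univ, hF, ← Finset.mul_sum, hSdef]
    simp only [nsmul_eq_mul]
    ring
  have step16 : S = ∑ z ∈ Finset.univ.filter (fun z : F2 => tr (d * z) = 1), GG z := by
    rw [hSdef]
    apply Finset.sum_bij (i := fun (x : F) _ => ((Y x : F2)))
    · intro x _
      simp only [Finset.mem_filter, Finset.mem_univ, true_and]
      show tr (d * (1 + algebraMap F F2 x * B)) = 1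
      rw [mul_add, mul_one, htradd, htrd, htrdB, add_zero]
    · intro x1 _ x2 _ hxy
      have h1 : 1 + algebraMap F F2 x1 * B = 1 + algebraMap F F2 x2 * B := hxy
      have h2 : algebraMap F F2 x1 = algebraMap F F2 x2 :=
        mul_right_cancel₀ hBne (by linear_combination h1)
      exact hinj h2
    · intro z hz
      simp only [Finset.mem_filter, Finset.mem_univ, true_and] at hz
      have hw : tr (d * (z - 1)) = 0 := by
        have h1 : d * z = d * 1 + d * (z - 1) := by ring
        rw [h1, htradd, mul_one, htrd] at hz
        linear_combination hz
      have h2 : d * (z-1) + (d * (z-1))^q = 0 := by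
        have h2' := htr (d * (z-1))
        rw [hw, map_zero] at h2'
        exact h2'.symm
      rw [mul_pow, hdq, hddef] at h2
      have hinvAB : (A - B)⁻¹ * (A - B) = 1 := inv_mul_cancel₀ hbne
      have h3 : A * (z-1) - B * (z-1)^q = 0 := by
        linear_combination (A - B) * h2 - (A*(z-1) - B*(z-1)^q) * hinvAB
      have hzq : (z - 1) ^ q = A * B⁻¹ * (z - 1) := by
        apply mul_left_cancel₀ hBne
        have h4 : B * (A * B⁻¹ * (z-1)) = A * (z-1) := by
          field_simp
        rw [h4]
        linear_combination -h3
      have hfixz : ((z - 1) * B⁻¹) ^ q = (z - 1) * B⁻¹ := by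
        rw [mul_pow, hzq, inv_pow, hBq]
        field_simp
      obtain ⟨u, hu⟩ := hfrob _ hfixz
      refine ⟨u, Finset.mem_univ u, ?_⟩
      show (1 + algebraMap F F2 u * B) = z
      rw [hu]
      have h5 : (z - 1) * B⁻¹ * B = z - 1 := by field_simp
      rw [h5]
      ring
    · intro x _
      simp only [hGGdef]
      rw [dif_neg (Y x).ne_zero]
      exact congrArg gg (Units.ext rfl)
  set Shat : F → ℂ := fun u => ∑ z : F2, GG z * ψ (u * tr (d * z)) with hShatdef
  set Shat1 : ℂ := ∑ z : F2, GG z * ψ (tr (d * z)) with hShat1def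
  have hqC : (q : ℂ) ≠ 0 := by
    exact_mod_cast (by omega : q ≠ 0)
  have hψne : (ψ : AddChar F ℂ) ≠ 1 := AddChar.ne_one_iff.2 hψ
  have hpsum : ∀ t : F, (∑ u : F, ψ (u * t)) = if t = 0 then (q:ℂ) else 0 := by
    intro t
    by_cases ht : t = 0
    · rw [if_pos ht]
      rw [Finset.sum_congr rfl (fun u _ => by rw [ht, mul_zero, AddChar.map_zero_eq_one])]
      rw [Finset.sum_const, Finset.card_univ, hF]
      simp
    · rw [if_neg ht]
      have h1 := Fintype.sum_equiv (Equiv.mulRight₀ t ht) (fun u => ψ (u * t))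
        (fun v => ψ v) (fun u => rfl)
      rw [h1]
      exact AddChar.sum_eq_zero_of_ne_one hψne
  have step17 : S = (q:ℂ)⁻¹ * ∑ u : F, ψ (-u) * Shat u := by
    calc S = ∑ z : F2, (q:ℂ)⁻¹ * ∑ u : F, ψ (-u) * (GG z * ψ (u * tr (d * z))) := by
          rw [step16, Finset.sum_filter]
          apply Finset.sum_congr rfl
          intro z _
          have h1 : ∀ u : F, ψ (-u) * (GG z * ψ (u * tr (d * z)))
              = GG z * ψ (u * (tr (d * z) - 1)) := by
            intro u
            rw [show u * (tr (d*z) - 1) = u * tr (d*z) + (-u) by ring,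
              AddChar.map_add_eq_mul]
            ring
          rw [Finset.sum_congr rfl (fun u _ => h1 u), ← Finset.mul_sum, hpsum]
          by_cases hc : tr (d * z) = 1
          · rw [if_pos hc, if_pos (show tr (d*z) - 1 = 0 by rw [hc]; ring)]
            field_simp
          · rw [if_neg hc, if_neg (fun h => hc (by linear_combination h))]
            ring
      _ = (q:ℂ)⁻¹ * ∑ u : F, ψ (-u) * Shat u := by
          rw [← Finset.mul_sum]
          congr 1
          rw [Finset.sum_comm]
          apply Finset.sum_congr rfl
          intro u _
          rw [hShatdef]
          simp only []
          rw [Finset.mul_sum]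
  have hsplit : ∀ f : F2 → ℂ, ∑ z : F2, f z = f 0 + ∑ x : F2ˣ, f (x : F2) := by
    intro f
    rw [Fintype.sum_eq_add_sum_compl 0 f]
    congr 1
    symm
    apply Finset.sum_bij (i := fun (x : F2ˣ) _ => (x : F2))
    · intro x _
      simp [Units.ne_zero x]
    · intro a _ b _ h
      exact Units.ext h
    · intro z hz
      have hz0 : z ≠ 0 := by simpa using hz
      exact ⟨Units.mk0 z hz0, Finset.mem_univ _, rfl⟩
    · intro x _
      rfl
  have hGGx : ∀ x : F2ˣ, GG (x : F2) = gg x := by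
    intro x
    simp only [hGGdef]
    rw [dif_neg (Units.ne_zero x)]
    congr 1
    exact Units.ext rfl
  have hGG0 : GG 0 = 0 := by
    simp [hGGdef]
  have hgg0 : ∑ x : F2ˣ, gg x = 0 := by
    have hclsμ : cls (ω ^ ((e/2 : ℕ) : ℤ)) = ((e/2:ℕ) : ZMod e) := by
      rw [hcls _ _ rfl]
      exact Int.cast_natCast _
    have hflipμ : ∀ x : F2ˣ, gg ((ω ^ ((e/2 : ℕ) : ℤ)) * x) = - gg x := by
      intro x
      have hclsmul : cls ((ω ^ ((e/2 : ℕ) : ℤ)) * x) = cls x + ((e/2:ℕ) : ZMod e) := by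
        have h1 : ω ^ (((e/2:ℕ):ℤ) + lg x) = (ω ^ ((e/2 : ℕ) : ℤ)) * x := by
          rw [zpow_add, hlg x]
        rw [hcls _ _ h1, Int.cast_add, Int.cast_natCast]
        exact add_comm _ _
      simp only [hggdef, hclsmul]
      by_cases hc : cls x ∈ Hb
      · rw [if_neg (fun h => (hflip _).1 h hc), if_pos hc]
      · rw [if_pos ((hflip _).2 hc), if_neg hc]
        norm_num
    have h2 : ∑ x : F2ˣ, gg ((ω ^ ((e/2 : ℕ) : ℤ)) * x) = ∑ x : F2ˣ, gg x :=
      Fintype.sum_equiv (Equiv.mulLeft (ω ^ ((e/2 : ℕ) : ℤ))) (fun x => gg ((ω ^ ((e/2 : ℕ) : ℤ)) * x)) gg (fun x => rfl)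
    rw [Finset.sum_congr rfl (fun x _ => hflipμ x), Finset.sum_neg_distrib] at h2
    linear_combination -h2/2
  have step18 : Shat 0 = 0 := by
    rw [hShatdef]
    simp only [zero_mul, AddChar.map_zero_eq_one, mul_one]
    rw [hsplit GG, hGG0, Finset.sum_congr rfl (fun x _ => hGGx x), hgg0]
    simp
  have step19 : ∀ u : F, u ≠ 0 → Shat u = quadChar F u * Shat1 := by
    intro u hu
    have hune : algebraMap F F2 u ≠ 0 := fun hh => hu (hinj (by rw [hh, map_zero]))
    have hinvne : (algebraMap F F2 u)⁻¹ ≠ 0 := inv_ne_zero hune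
    have hpt : ∀ w : F2, GG ((algebraMap F F2 u)⁻¹ * w) * ψ (u * tr (d * ((algebraMap F F2 u)⁻¹ * w)))
        = quadChar F u * (GG w * ψ (tr (d * w))) := by
      intro w
      have htr1 : u * tr (d * ((algebraMap F F2 u)⁻¹ * w)) = tr (d * w) := by
        rw [show d * ((algebraMap F F2 u)⁻¹ * w) = (algebraMap F F2 u)⁻¹ * (d * w) by ring,
          ← map_inv₀, htrsmul, ← mul_assoc, mul_inv_cancel₀ hu, one_mul]
      rw [htr1]
      by_cases hw : w = 0
      · simp [hw, hGG0]
      · have hww : (algebraMap F F2 u)⁻¹ * w ≠ 0 := mul_ne_zero hinvne hw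
        have hG1 : GG ((algebraMap F F2 u)⁻¹ * w) = gg (Units.mk0 _ hww) := by
          rw [hGGdef]
          simp only []
          rw [dif_neg hww]
        have hG2 : GG w = gg (Units.mk0 w hw) := by
          rw [hGGdef]
          simp only []
          rw [dif_neg hw]
        rw [hG1, hG2]
        have hclsC := hC u hu (Units.mk0 (algebraMap F F2 u) hune) rfl
        have hsplitu : Units.mk0 _ hww = (Units.mk0 (algebraMap F F2 u) hune)⁻¹ * Units.mk0 w hw := by
          apply Units.ext
          rw [Units.val_mul, Units.val_inv_eq_inv_val]
          rfl
        have h1 : ω ^ (lg (Units.mk0 w hw) - lg (Units.mk0 (algebraMap F F2 u) hune))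
            = (Units.mk0 (algebraMap F F2 u) hune)⁻¹ * Units.mk0 w hw := by
          rw [zpow_sub, hlg, hlg]
          exact mul_comm _ _
        have hclsinv : cls (Units.mk0 _ hww)
            = cls (Units.mk0 w hw) + (if IsSquare u then 0 else ((e/2:ℕ) : ZMod e)) := by
          rw [hsplitu, hcls _ _ h1]
          push_cast
          have h2 : ((lg (Units.mk0 (algebraMap F F2 u) hune) : ℤ) : ZMod e)
              = (if IsSquare u then 0 else ((e/2:ℕ) : ZMod e)) := hclsC
          rw [h2]
          split_ifs with hsq
          · show _ - _ = cls (Units.mk0 w hw) + 0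
            rw [sub_zero, add_zero]
          · show _ - _ = cls (Units.mk0 w hw) + _
            have : cls (Units.mk0 w hw) = ((lg (Units.mk0 w hw) : ℤ) : ZMod e) := rfl
            rw [← this]
            linear_combination -h2e
        rw [hggdef]
        simp only [hclsinv]
        rw [quadChar]
        simp only [if_neg hu]
        by_cases hsq : IsSquare u
        · simp only [if_pos hsq, add_zero]
          ring
        · simp only [if_neg hsq]
          by_cases hc : cls (Units.mk0 w hw) ∈ Hb
          · rw [if_neg (fun h => (hflip _).1 h hc), if_pos hc]
            ring
          · rw [if_pos ((hflip _).2 hc), if_neg hc]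
            ring
    rw [hShatdef, hShat1def]
    simp only []
    calc (∑ z : F2, GG z * ψ (u * tr (d * z)))
        = ∑ w : F2, GG ((algebraMap F F2 u)⁻¹ * w) * ψ (u * tr (d * ((algebraMap F F2 u)⁻¹ * w))) := by
          apply Fintype.sum_equiv (Equiv.mulLeft₀ (algebraMap F F2 u) hune)
          intro z
          rw [Equiv.mulLeft₀_apply]
          rw [← mul_assoc, inv_mul_cancel₀ hune, one_mul]
      _ = ∑ w : F2, quadChar F u * (GG w * ψ (tr (d * w))) :=
          Finset.sum_congr rfl (fun w _ => hpt w)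
      _ = quadChar F u * ∑ z : F2, GG z * ψ (tr (d * z)) := by rw [← Finset.mul_sum]
  set Gs : ℂ := ∑ x : F, quadChar F x * ψ x with hGsdef
  have hqcQ : ∀ x : F, quadChar F x = ((quadraticChar F x : ℤ) : ℂ) := by
    intro x
    rw [quadChar, quadraticChar_apply, quadraticCharFun]
    split_ifs <;> simp
  have hqcmul : ∀ a b : F, quadChar F (a * b) = quadChar F a * quadChar F b := by
    intro a b
    rw [hqcQ, hqcQ, hqcQ, map_mul]
    push_cast
    ring
  have step22 : S = quadChar F (-1) * Gs * Shat1 * (q:ℂ)⁻¹ := by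
    rw [step17]
    have hterm : ∀ u : F, ψ (-u) * Shat u = quadChar F u * ψ (-u) * Shat1 := by
      intro u
      by_cases hu : u = 0
      · rw [hu, step18, quadChar]
        simp
      · rw [step19 u hu]
        ring
    rw [Finset.sum_congr rfl (fun u _ => hterm u)]
    have hre : ∑ u : F, quadChar F u * ψ (-u) = quadChar F (-1) * Gs := by
      have h1 : ∑ u : F, quadChar F u * ψ (-u) = ∑ v : F, quadChar F (-v) * ψ (-(-v)) :=
        Fintype.sum_equiv (Equiv.neg F) _ _ (fun u => by simp)
      rw [h1, hGsdef, Finset.mul_sum]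
      apply Finset.sum_congr rfl
      intro v _
      rw [neg_neg, show (-v) = (-1) * v by ring, hqcmul]
      ring
    calc (q:ℂ)⁻¹ * ∑ u : F, quadChar F u * ψ (-u) * Shat1
        = (q:ℂ)⁻¹ * ((∑ u : F, quadChar F u * ψ (-u)) * Shat1) := by rw [Finset.sum_mul]
      _ = quadChar F (-1) * Gs * Shat1 * (q:ℂ)⁻¹ := by rw [hre]; ring
  set c : ZMod e → ℂ :=
    fun a => ∑ x ∈ Finset.univ.filter (fun x : F2ˣ => cls x = a), ψ (tr (d * (x : F2))) with hcdef
  set Sig : ℂ := ∑ a ∈ Hb, c a with hSigdef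
  have htot : ∑ a : ZMod e, c a = -1 := by
    have h1 : ∑ a : ZMod e, c a = ∑ x : F2ˣ, ψ (tr (d * (x:F2))) := by
      rw [hcdef]
      exact Finset.sum_fiberwise Finset.univ cls _
    rw [h1]
    have h2 : ∑ z : F2, ψ (tr (d * z)) = 0 := by
      have h3 : (ψ.compAddMonoidHom (AddMonoidHom.mk' (fun z : F2 => tr (d * z))
          (fun a b => by
            show tr (d * (a + b)) = tr (d * a) + tr (d * b)
            rw [mul_add, htradd]))) ≠ 1 := by
        rw [AddChar.ne_one_iff]
        obtain ⟨a, ha⟩ := hψ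
        refine ⟨algebraMap F F2 a, ?_⟩
        rw [AddChar.compAddMonoidHom_apply]
        show ψ (tr (d * algebraMap F F2 a)) ≠ 1
        rw [show d * algebraMap F F2 a = algebraMap F F2 a * d by ring, htrsmul, htrd, mul_one]
        exact ha
      have h4 := AddChar.sum_eq_zero_of_ne_one h3
      rw [← h4]
      exact Finset.sum_congr rfl (fun z _ => by rw [AddChar.compAddMonoidHom_apply]; rfl)
    have h5 := hsplit (fun z => ψ (tr (d * z)))
    rw [h2] at h5
    have h6 : tr (d * 0) = 0 := by rw [mul_zero, htr0]
    simp only [h6, AddChar.map_zero_eq_one] at h5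
    linear_combination -h5
  have step23 : Shat1 = 1 + 2 * Sig := by
    calc Shat1 = GG 0 * ψ (tr (d * 0)) + ∑ x : F2ˣ, GG (x:F2) * ψ (tr (d * (x:F2))) := by
          rw [hShat1def]
          exact hsplit _
      _ = ∑ x : F2ˣ, gg x * ψ (tr (d * (x:F2))) := by
          rw [hGG0, zero_mul, zero_add]
          exact Finset.sum_congr rfl (fun x _ => by rw [hGGx])
      _ = ∑ a : ZMod e, ∑ x ∈ Finset.univ.filter (fun x : F2ˣ => cls x = a),
            gg x * ψ (tr (d * (x:F2))) := (Finset.sum_fiberwise _ _ _).symm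
      _ = ∑ a : ZMod e, (if a ∈ Hb then (1:ℂ) else -1) * c a := by
          apply Finset.sum_congr rfl
          intro a _
          rw [hcdef]
          simp only []
          rw [Finset.mul_sum]
          apply Finset.sum_congr rfl
          intro x hx
          have hxa : cls x = a := (Finset.mem_filter.1 hx).2
          rw [hggdef]
          simp only [hxa]
      _ = ∑ a : ZMod e, (2 * (if a ∈ Hb then c a else 0) - c a) := by
          apply Finset.sum_congr rfl
          intro a _
          by_cases hc : a ∈ Hb
          · rw [if_pos hc, if_pos hc]
            ring
          · rw [if_neg hc, if_neg hc]
            ring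
      _ = 2 * (∑ a ∈ Hb, c a) - ∑ a : ZMod e, c a := by
          rw [Finset.sum_sub_distrib, ← Finset.mul_sum, ← Finset.sum_filter]
          have hfilter : Finset.univ.filter (fun a : ZMod e => a ∈ Hb) = Hb := by
            ext a
            simp
          rw [hfilter]
      _ = 1 + 2 * Sig := by
          rw [htot, hSigdef]
          ring
  have step24 : ∑ j ∈ H, ∑ᶠ y ∈ cyc ω e (j : ℤ),
      ψ (tr (((ω ^ ((q : ℤ) * ℓ) : F2ˣ) : F2) *
        (((ω ^ (ℓ * (q : ℤ)) : F2ˣ) : F2) - ((ω ^ ℓ : F2ˣ) : F2))⁻¹ * y)) = Sig := by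
    have hd' : ((ω ^ ((q : ℤ) * ℓ) : F2ˣ) : F2) *
        (((ω ^ (ℓ * (q : ℤ)) : F2ˣ) : F2) - ((ω ^ ℓ : F2ˣ) : F2))⁻¹ = d := by
      rw [hddef, hAdef, hBdef, mul_comm ℓ (q:ℤ)]
    have hcycfin : ∀ j : ℕ, (cyc ω e (j:ℤ)) = ↑(Finset.image (fun x : F2ˣ => (x:F2))
        (Finset.univ.filter (fun x : F2ˣ => cls x = (j : ZMod e)))) := by
      intro j
      ext z
      simp only [Finset.coe_image, Set.mem_image, Finset.mem_coe, Finset.mem_filter,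
        Finset.mem_univ, true_and]
      constructor
      · rintro ⟨k, hk⟩
        refine ⟨ω ^ ((j:ℤ) + e * k), ?_, hk.symm⟩
        rw [hcls _ _ rfl]
        push_cast [ZMod.natCast_self]
        ring
      · rintro ⟨x, hx, rfl⟩
        refine (hmem x (j:ℤ)).2 ?_
        rw [Int.cast_natCast]
        exact hx
    have hterm : ∀ j : ℕ, (∑ᶠ y ∈ cyc ω e (j:ℤ), ψ (tr (d * y))) = c ((j:ℕ) : ZMod e) := by
      intro j
      rw [hcycfin j, finsum_mem_coe_finset,
        Finset.sum_image (fun x _ y _ h => Units.ext h)]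
    have hinjH : ∀ x ∈ H, ∀ y ∈ H, (x : ZMod e) = (y : ZMod e) → x = y := by
      intro x hx y hy hxy
      have hxl : x < e := Finset.mem_range.1 (hHsub hx)
      have hyl : y < e := Finset.mem_range.1 (hHsub hy)
      have h1 := congrArg ZMod.val hxy
      rwa [ZMod.val_cast_of_lt hxl, ZMod.val_cast_of_lt hyl] at h1
    calc ∑ j ∈ H, ∑ᶠ y ∈ cyc ω e (j : ℤ), ψ (tr (((ω ^ ((q : ℤ) * ℓ) : F2ˣ) : F2) *
              (((ω ^ (ℓ * (q : ℤ)) : F2ˣ) : F2) - ((ω ^ ℓ : F2ˣ) : F2))⁻¹ * y))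
        = ∑ j ∈ H, c ((j:ℕ) : ZMod e) := by
          apply Finset.sum_congr rfl
          intro j _
          rw [← hterm j]
          apply finsum_congr
          intro y
          apply finsum_congr_Prop rfl
          intro _
          rw [hd']
      _ = Sig := by
          rw [hSigdef, hHb, Finset.sum_image hinjH]
  have hχneg : χ (-1) = quadChar F (-1) := by
    have h := hχη (-1) (by norm_num)
    rw [map_neg, map_one] at h
    exact h
  rw [step24, step14, step22, step23, hχneg]
  field_simp
  ring
end
end

section
/- Let m be a positive integer such that q = 4m² + 4m + 3 is a prime power, and let C := C_0^{(2,q)} be the set of nonzero squares of F_q. Suppose D ⊆ F_q satisfies |D| = 2m² + m + 2 and, for every a ∈ F_q, |D ∩ ((C∪{0}) + a)| ∈ {m²+1, m²+2, m²+m+1, m²+m+2}. Then there exists an Hadamard matrix of order n = 4(m² + m + 1) each of whose row sums equals either 2m − 2 or 2m + 2. -/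
open Finset

namespace Stmt9

variable {F : Type} [Field F] [Fintype F] [DecidableEq F]

lemma sum_shift (f : F → ℤ) (x : F) : ∑ y : F, f (y - x) = ∑ y : F, f y :=
  Fintype.sum_equiv (Equiv.subRight x) _ _ (fun _ => rfl)

lemma key (hc : ringChar F ≠ 2) {a : F} (ha : a ≠ 0) :
    ∑ x : F, quadraticChar F x * quadraticChar F (x + a) = -1 := by
  have h0 : ∑ x : F, quadraticChar F x * quadraticChar F (x + a)
      = ∑ x ∈ univ.erase 0, quadraticChar F x * quadraticChar F (x + a) := by
    rw [Finset.sum_erase]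
    simp
  rw [h0]
  have h1 : ∀ x ∈ univ.erase (0 : F),
      quadraticChar F x * quadraticChar F (x + a) = quadraticChar F (1 + a * x⁻¹) := by
    intro x hx
    have hx0 : x ≠ 0 := (Finset.mem_erase.mp hx).1
    have hxx : x * (x + a) = x ^ 2 * (1 + a * x⁻¹) := by field_simp
    calc quadraticChar F x * quadraticChar F (x + a)
        = quadraticChar F (x * (x + a)) := (map_mul _ _ _).symm
      _ = quadraticChar F (x ^ 2) * quadraticChar F (1 + a * x⁻¹) := by rw [hxx, map_mul]
      _ = quadraticChar F (1 + a * x⁻¹) := by rw [quadraticChar_sq_one' hx0, one_mul]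
  rw [Finset.sum_congr rfl h1]
  have h2 : ∑ x ∈ univ.erase (0 : F), quadraticChar F (1 + a * x⁻¹)
      = ∑ y ∈ univ.erase (1 : F), quadraticChar F y := by
    apply Finset.sum_nbij' (fun x => 1 + a * x⁻¹) (fun y => a * (y - 1)⁻¹)
    · intro x hx
      have hx0 : x ≠ 0 := (Finset.mem_erase.mp hx).1
      simp only [mem_erase, mem_univ, and_true]
      intro h
      have h2 : a * x⁻¹ = 0 := by linear_combination h
      simp [hx0, ha] at h2
    · intro y hy
      have hy1 : y ≠ 1 := (Finset.mem_erase.mp hy).1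
      simp only [mem_erase, mem_univ, and_true]
      have : y - 1 ≠ 0 := sub_ne_zero.mpr hy1
      simp [ha, this]
    · intro x hx
      have hx0 : x ≠ 0 := (Finset.mem_erase.mp hx).1
      field_simp
      simp [ha]
    · intro y hy
      have hy1 : y ≠ 1 := (Finset.mem_erase.mp hy).1
      have h1 : y - 1 ≠ 0 := sub_ne_zero.mpr hy1
      field_simp
      ring
    · intro x hx; rfl
  rw [h2, Finset.sum_erase_eq_sub (Finset.mem_univ (1 : F)),
    quadraticChar_sum_zero hc]
  simp


lemma gsum (hc : ringChar F ≠ 2) (x : F) :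
    ∑ y : F, (if x = y then (1 : ℤ) else quadraticChar F (y - x)) = 1 := by
  have h : ∀ y : F, (if x = y then (1 : ℤ) else quadraticChar F (y - x))
      = quadraticChar F (y - x) + (if x = y then 1 else 0) := by
    intro y
    by_cases hxy : x = y
    · simp [hxy]
    · simp [hxy]
  rw [Finset.sum_congr rfl (fun y _ => h y), Finset.sum_add_distrib,
    sum_shift (fun z => (quadraticChar F z : ℤ)) x, quadraticChar_sum_zero hc]
  simp

lemma pairsum (hc : ringChar F ≠ 2) (hcard : Fintype.card F % 4 = 3) {x x' : F}
    (hxx : x ≠ x') :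
    ∑ y : F, (if x = y then (1 : ℤ) else quadraticChar F (y - x)) *
      (if x' = y then 1 else quadraticChar F (y - x')) = -1 := by
  have hneg1 : quadraticChar F (-1) = -1 := by
    rw [quadraticChar_neg_one_iff_not_isSquare, FiniteField.isSquare_neg_one_iff]
    simp [hcard]
  have h : ∀ y : F, (if x = y then (1 : ℤ) else quadraticChar F (y - x)) *
      (if x' = y then 1 else quadraticChar F (y - x'))
      = quadraticChar F (y - x) * quadraticChar F (y - x')
        + (if x = y then quadraticChar F (y - x') else 0)
        + (if x' = y then quadraticChar F (y - x) else 0) := by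
    intro y
    by_cases h1 : x = y
    · have h2 : x' ≠ y := fun h => hxx (h1.trans h.symm)
      simp [h1, h2]
    · by_cases h2 : x' = y
      · simp [h1, h2]
      · simp [h1, h2]
  rw [Finset.sum_congr rfl (fun y _ => h y)]
  rw [Finset.sum_add_distrib, Finset.sum_add_distrib]
  have hkey : ∑ y : F, quadraticChar F (y - x) * quadraticChar F (y - x') = -1 := by
    have := sum_shift (fun z => (quadraticChar F z * quadraticChar F (z + (x - x')) : ℤ)) x
    have heq : ∀ y : F, quadraticChar F (y - x) * quadraticChar F (y - x)
        = quadraticChar F (y - x) * quadraticChar F (y - x) := fun _ => rfl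
    calc ∑ y : F, quadraticChar F (y - x) * quadraticChar F (y - x')
        = ∑ y : F, quadraticChar F (y - x) * quadraticChar F ((y - x) + (x - x')) := by
          apply Finset.sum_congr rfl; intro y _; ring_nf
      _ = ∑ z : F, quadraticChar F z * quadraticChar F (z + (x - x')) := this
      _ = -1 := key hc (sub_ne_zero.mpr hxx)
  have h2 : ∑ y : F, (if x = y then quadraticChar F (y - x') else (0 : ℤ))
      = quadraticChar F (x - x') := by
    rw [Finset.sum_ite_eq]
    simp
  have h3 : ∑ y : F, (if x' = y then quadraticChar F (y - x) else (0 : ℤ))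
      = quadraticChar F (x' - x) := by
    rw [Finset.sum_ite_eq]
    simp
  have h4 : quadraticChar F (x' - x) = - quadraticChar F (x - x') := by
    have : (x' - x) = -1 * (x - x') := by ring
    rw [this, map_mul, hneg1]
    ring
  rw [hkey, h2, h3, h4]
  ring

/-- Paley-type matrix on `Option F`. -/
def B (F : Type) [Field F] [Fintype F] [DecidableEq F] :
    Option F → Option F → ℤ
  | none, none => 1
  | none, some _ => 1
  | some _, none => -1
  | some x, some y => if x = y then 1 else quadraticChar F (y - x)

lemma B_pm (u v : Option F) : B F u v = 1 ∨ B F u v = -1 := by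
  match u, v with
  | none, none => left; rfl
  | none, some _ => left; rfl
  | some _, none => right; rfl
  | some x, some y =>
    by_cases h : x = y
    · left; simp [B, h]
    · have := quadraticChar_dichotomy (a := y - x) (sub_ne_zero.mpr (Ne.symm h))
      simp only [B, if_neg h]
      exact this

lemma ortho (hc : ringChar F ≠ 2) (hcard : Fintype.card F % 4 = 3) (u v : Option F) :
    ∑ w : Option F, B F u w * B F v w
      = if u = v then ((Fintype.card F : ℤ) + 1) else 0 := by
  match u, v with
  | none, none =>
    simp only [Fintype.sum_option, B, Finset.card_univ]
    simp
    ring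
  | none, some x =>
    rw [Fintype.sum_option]
    have : ∀ y : F, B F none (some y) * B F (some x) (some y)
        = (if x = y then (1 : ℤ) else quadraticChar F (y - x)) := by
      intro y; simp [B]
    simp only [this]
    rw [gsum hc x]
    simp [B]
  | some x, none =>
    rw [Fintype.sum_option]
    have : ∀ y : F, B F (some x) (some y) * B F none (some y)
        = (if x = y then (1 : ℤ) else quadraticChar F (y - x)) := by
      intro y; simp [B]
    simp only [this]
    rw [gsum hc x]
    simp [B]
  | some x, some x' =>
    by_cases hxx : x = x'
    · subst hxx
      rw [Fintype.sum_option]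
      have : ∀ y : F, B F (some x) (some y) * B F (some x) (some y) = 1 := by
        intro y
        rcases B_pm (F := F) (some x) (some y) with h | h <;> rw [h] <;> ring
      simp only [this]
      simp [B, Finset.card_univ]
      ring
    · rw [Fintype.sum_option]
      have : ∀ y : F, B F (some x) (some y) * B F (some x') (some y)
          = (if x = y then (1 : ℤ) else quadraticChar F (y - x)) *
            (if x' = y then 1 else quadraticChar F (y - x')) := by
        intro y; simp [B]
      simp only [this]
      rw [pairsum hc hcard hxx]
      simp [B, hxx]


open scoped Classical in
/-- column signs -/
noncomputable def t (D : Set F) : Option F → ℤ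
  | none => -1
  | some y => if y ∈ D then -1 else 1

lemma t_pm (D : Set F) (w : Option F) : t D w = 1 ∨ t D w = -1 := by
  classical
  match w with
  | none => right; rfl
  | some y =>
    by_cases hy : y ∈ D
    · right; simp [t, hy]
    · left; simp [t, hy]

lemma count (s : Set F) [DecidablePred (· ∈ s)] :
    (∑ y : F, if y ∈ s then (1 : ℤ) else 0) = s.ncard := by
  rw [Finset.sum_boole]
  have h : ((univ.filter (· ∈ s) : Finset F) : Set F) = s := by
    ext y; simp
  conv_rhs => rw [← h, Set.ncard_coe_finset]

open scoped Classical in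
lemma rowsum_none (D : Set F) :
    ∑ w : Option F, B F none w * t D w
      = (Fintype.card F : ℤ) - 1 - 2 * D.ncard := by
  rw [Fintype.sum_option]
  have h1 : ∀ y : F, B F none (some y) * t D (some y)
      = 1 - 2 * (if y ∈ D then (1 : ℤ) else 0) := by
    intro y
    by_cases hy : y ∈ D <;> simp [B, t, hy]
  rw [Finset.sum_congr rfl (fun y _ => h1 y), Finset.sum_sub_distrib, ← Finset.mul_sum,
    count D]
  simp [B, t, Finset.card_univ]
  ring

lemma mem_S_iff (C : Set F) (hC : C = {x : F | x ≠ 0 ∧ IsSquare x}) (x y : F) :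
    y ∈ ((fun z => z + x) '' (C ∪ {0})) ↔ (x = y ∨ quadraticChar F (y - x) = 1) := by
  constructor
  · rintro ⟨z, hz, rfl⟩
    rcases hz with hz | hz
    · rw [hC] at hz
      right
      have : z + x - x = z := by ring
      rw [this]
      exact (quadraticChar_one_iff_isSquare hz.1).mpr hz.2
    · left
      simp only [Set.mem_singleton_iff] at hz
      rw [hz]; ring
  · rintro (h | h)
    · exact ⟨0, Or.inr rfl, by rw [← h]; ring⟩
    · refine ⟨y - x, Or.inl ?_, by ring⟩
      rw [hC]
      have hne : y - x ≠ 0 := by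
        intro h0; rw [h0] at h; simp at h
      exact ⟨hne, (quadraticChar_one_iff_isSquare hne).mp h⟩

open scoped Classical in
lemma rowsum_some (hc : ringChar F ≠ 2) (C : Set F)
    (hC : C = {x : F | x ≠ 0 ∧ IsSquare x}) (D : Set F) (x : F) :
    ∑ w : Option F, B F (some x) w * t D w
      = 2 + 2 * (D.ncard : ℤ)
        - 4 * ((D ∩ ((fun z => z + x) '' (C ∪ {0}))).ncard : ℤ) := by
  set S : Set F := (fun z => z + x) '' (C ∪ {0}) with hS
  have hgS : ∀ y : F, (if x = y then (1 : ℤ) else quadraticChar F (y - x))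
      = 2 * (if y ∈ S then (1 : ℤ) else 0) - 1 := by
    intro y
    by_cases hxy : x = y
    · have hyS : y ∈ S := (mem_S_iff C hC x y).mpr (Or.inl hxy)
      simp [hxy, hyS]
    · by_cases hyS : y ∈ S
      · have := (mem_S_iff C hC x y).mp hyS
        rcases this with h | h
        · exact absurd h hxy
        · simp [hxy, hyS, h]
      · have hch : quadraticChar F (y - x) = -1 := by
          have hne : y - x ≠ 0 := sub_ne_zero.mpr (fun h => hxy (by rw [h]))
          rcases quadraticChar_dichotomy hne with h | h
          · exact absurd ((mem_S_iff C hC x y).mpr (Or.inr h)) hyS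
          · exact h
        simp [hxy, hyS, hch]
  have hpt : ∀ y : F, (if x = y then (1 : ℤ) else quadraticChar F (y - x)) * t D (some y)
      = (if x = y then (1 : ℤ) else quadraticChar F (y - x))
        - 4 * (if y ∈ D ∩ S then (1 : ℤ) else 0) + 2 * (if y ∈ D then (1 : ℤ) else 0) := by
    intro y
    rw [hgS y]
    by_cases hyD : y ∈ D <;> by_cases hyS : y ∈ S <;>
      simp [t, hyD, hyS, Set.mem_inter_iff] <;> ring
  rw [Fintype.sum_option]
  have hb : ∀ y : F, B F (some x) (some y) * t D (some y)
      = (if x = y then (1 : ℤ) else quadraticChar F (y - x)) * t D (some y) := by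
    intro y; simp [B]
  rw [Finset.sum_congr rfl (fun y _ => hb y), Finset.sum_congr rfl (fun y _ => hpt y)]
  rw [Finset.sum_add_distrib, Finset.sum_sub_distrib, ← Finset.mul_sum, ← Finset.mul_sum]
  rw [count (D ∩ S), count D, gsum hc x]
  have hbt : B F (some x) none * t D none = 1 := by simp [B, t]
  linear_combination hbt

lemma pm_mul {a b : ℤ} (ha : a = 1 ∨ a = -1) (hb : b = 1 ∨ b = -1) :
    a * b = 1 ∨ a * b = -1 := by
  rcases ha with h | h <;> rcases hb with h' | h' <;> simp [h, h']

lemma abs_pick {r c : ℤ} (hc : 0 ≤ c) (h : r = c ∨ r = -c) :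
    (if 0 ≤ r then (1 : ℤ) else -1) * r = c := by
  rcases h with h | h <;> subst h <;> split <;> simp <;> omega

end Stmt9

open Stmt9 in
/-- A four-intersection set with parameters
`(2m²+m+2; {m²+1, m²+2, m²+m+1, m²+m+2})` for the translates of `C ∪ {0}` (with `C` the
nonzero squares of `F_q`, `q = 4m²+4m+3`) yields a biregular Hadamard matrix of order
`4(m²+m+1)` with row sums `2m−2` or `2m+2`. -/
theorem stmt_9 (m : ℕ) (hm : 0 < m)
    (F : Type) [Field F] [Fintype F] (hF : Fintype.card F = 4 * m ^ 2 + 4 * m + 3)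
    (C : Set F) (hC : C = {x : F | x ≠ 0 ∧ IsSquare x})
    (D : Set F) (hD : D.ncard = 2 * m ^ 2 + m + 2)
    (hint : ∀ a : F,
      (D ∩ ((fun x => x + a) '' (C ∪ {0}))).ncard ∈
        ({m ^ 2 + 1, m ^ 2 + 2, m ^ 2 + m + 1, m ^ 2 + m + 2} : Set ℕ)) :
    ∃ H : Matrix (Fin (4 * (m ^ 2 + m + 1))) (Fin (4 * (m ^ 2 + m + 1))) ℤ,
      (∀ i j, H i j = 1 ∨ H i j = -1) ∧
      H * H.transpose = ((4 * (m ^ 2 + m + 1) : ℕ) : ℤ) • (1 : Matrix _ _ ℤ) ∧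
      (∀ i, (∑ j, H i j) = 2 * (m : ℤ) - 2 ∨ (∑ j, H i j) = 2 * (m : ℤ) + 2) := by
  classical
  have hm1 : (1 : ℤ) ≤ (m : ℤ) := by exact_mod_cast hm
  have hcard3 : Fintype.card F % 4 = 3 := by rw [hF]; omega
  have hc2 : ringChar F ≠ 2 := by
    intro h
    have h2 := FiniteField.even_card_of_char_two h
    rw [hF] at h2
    omega
  have hcardopt : Fintype.card (Fin (4 * (m ^ 2 + m + 1))) = Fintype.card (Option F) := by
    rw [Fintype.card_option, hF, Fintype.card_fin]
    ring
  set e : Fin (4 * (m ^ 2 + m + 1)) ≃ Option F := Fintype.equivOfCardEq hcardopt with he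
  refine ⟨fun i j =>
      (if 0 ≤ ∑ w : Option F, B F (e i) w * t D w then (1 : ℤ) else -1)
        * B F (e i) (e j) * t D (e j), ?_, ?_, ?_⟩
  · intro i j
    apply pm_mul (pm_mul _ (B_pm _ _)) (t_pm D _)
    split
    · left; rfl
    · right; rfl
  · ext i i'
    simp only [Matrix.mul_apply, Matrix.transpose_apply, Matrix.smul_apply, Matrix.one_apply,
      smul_eq_mul]
    erw [Matrix.mul_apply]; simp only [Matrix.transpose, Matrix.of_apply]
    set a : ℤ := if 0 ≤ ∑ w : Option F, B F (e i) w * t D w then (1 : ℤ) else -1 with ha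
    set a' : ℤ := if 0 ≤ ∑ w : Option F, B F (e i') w * t D w then (1 : ℤ) else -1 with ha'
    have hterm : ∀ j ∈ Finset.univ, (a * B F (e i) (e j) * t D (e j))
        * (a' * B F (e i') (e j) * t D (e j))
        = (a * a') * (B F (e i) (e j) * B F (e i') (e j)) := by
      intro j _
      rcases t_pm D (e j) with h | h <;> rw [h] <;> ring
    rw [Finset.sum_congr rfl hterm, ← Finset.mul_sum]
    have hre : ∑ j, B F (e i) (e j) * B F (e i') (e j)
        = ∑ w : Option F, B F (e i) w * B F (e i') w :=
      Equiv.sum_comp e (fun w => B F (e i) w * B F (e i') w)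
    rw [hre, ortho hc2 hcard3]
    by_cases hii : i = i'
    · subst hii
      have haa : a * a' = 1 := by
        rw [ha, ha']
        split <;> ring
      rw [haa]
      simp only [if_pos rfl, one_mul, mul_one]
      rw [hF]
      push_cast
      ring
    · have hee : ¬ (e i = e i') := fun h => hii (e.injective h)
      rw [if_neg hee, if_neg hii]
      ring
  · have hsum : ∀ u : Option F,
        (∑ j, (if 0 ≤ ∑ w : Option F, B F u w * t D w then (1 : ℤ) else -1)
          * B F u (e j) * t D (e j))
        = (if 0 ≤ ∑ w : Option F, B F u w * t D w then (1 : ℤ) else -1)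
          * ∑ w : Option F, B F u w * t D w := by
      intro u
      simp only [mul_assoc]
      rw [← Finset.mul_sum]
      congr 1
      exact Equiv.sum_comp e (fun w => B F u w * t D w)
    have hmain : ∀ u : Option F,
        (if 0 ≤ ∑ w : Option F, B F u w * t D w then (1 : ℤ) else -1)
          * (∑ w : Option F, B F u w * t D w) = 2 * (m : ℤ) - 2
        ∨ (if 0 ≤ ∑ w : Option F, B F u w * t D w then (1 : ℤ) else -1)
          * (∑ w : Option F, B F u w * t D w) = 2 * (m : ℤ) + 2 := by
      intro u
      match u with
      | none =>
        left
        apply abs_pick (by omega)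
        left
        rw [rowsum_none D, hF, hD]
        push_cast
        ring
      | some x =>
        have hrx := rowsum_some hc2 C hC D x
        have hk := hint x
        simp only [Set.mem_insert_iff, Set.mem_singleton_iff] at hk
        rcases hk with hk | hk | hk | hk
        · right
          apply abs_pick (by omega)
          left
          rw [hrx, hD, hk]
          push_cast
          ring
        · left
          apply abs_pick (by omega)
          left
          rw [hrx, hD, hk]
          push_cast
          ring
        · left
          apply abs_pick (by omega)
          right
          rw [hrx, hD, hk]
          push_cast
          ring
        · right
          apply abs_pick (by omega)
          right
          rw [hrx, hD, hk]
          push_cast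
          ring
    intro i
    rw [hsum (e i)]
    exact hmain (e i)
end

section
/- Let q be an odd prime power and ω a generator of F_{q²}^×. For each i ∈ {0, 1}, the set { x ∈ C_1^{(2,q²)} : Tr_{F_{q²}/F_q}(x·ω^{(q+1)/2}) ∈ C_i^{(2,q)} } has exactly (q² − 1)/4 elements. -/
private lemma aux_mul_sq {K : Type} [Field K] [Fintype K] (hK : ringChar K ≠ 2) {a b : K}
    (ha : a ≠ 0) (hb : b ≠ 0) : IsSquare (a * b) ↔ (IsSquare a ↔ IsSquare b) := by
  rw [FiniteField.isSquare_iff hK (mul_ne_zero ha hb), FiniteField.isSquare_iff hK ha,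
    FiniteField.isSquare_iff hK hb, mul_pow]
  have hne : (-1 : K) ≠ 1 := Ring.neg_one_ne_one_of_char_ne_two hK
  rcases FiniteField.pow_dichotomy hK ha with h | h <;>
    rcases FiniteField.pow_dichotomy hK hb with h' | h' <;>
      rw [h, h'] <;> simp [hne, hne.symm]

/-- for each `i ∈ {0,1}`, the set
`{x ∈ C_1^{(2,q²)} : Tr_{F_{q²}/F_q}(x·ω^{(q+1)/2}) ∈ C_i^{(2,q)}}` has exactly
`(q² − 1)/4` elements (Remark 4.3 of the paper). -/
theorem stmt_11 (q : ℕ) (hq : IsPrimePow q) (hqodd : Odd q)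
    (F F2 : Type) [Field F] [Fintype F] [Field F2] [Fintype F2] [Algebra F F2]
    (hF : Fintype.card F = q) (hF2 : Fintype.card F2 = q ^ 2)
    (ω : F2ˣ) (hω : ∀ x : F2ˣ, x ∈ Subgroup.zpowers ω)
    (tr : F2 → F) (htr : ∀ x : F2, algebraMap F F2 (tr x) = x + x ^ q) :
    ({x : F2 | (x ≠ 0 ∧ ¬ IsSquare x) ∧
        (tr (x * ((ω ^ ((q + 1) / 2) : F2ˣ) : F2)) ≠ 0 ∧
          IsSquare (tr (x * ((ω ^ ((q + 1) / 2) : F2ˣ) : F2))))}).ncard = (q ^ 2 - 1) / 4 ∧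
    ({x : F2 | (x ≠ 0 ∧ ¬ IsSquare x) ∧
        (tr (x * ((ω ^ ((q + 1) / 2) : F2ˣ) : F2)) ≠ 0 ∧
          ¬ IsSquare (tr (x * ((ω ^ ((q + 1) / 2) : F2ˣ) : F2))))}).ncard = (q ^ 2 - 1) / 4 := by
  classical
  obtain ⟨k, hk⟩ := hqodd
  have hq2 : 2 ≤ q := hq.two_le
  obtain ⟨m, hm⟩ : ∃ m, m = k * k := ⟨_, rfl⟩
  obtain ⟨Q, hQd⟩ : ∃ Q, Q = q ^ 2 := ⟨_, rfl⟩
  rw [← hQd] at hF2 ⊢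
  have hQ : Q = 4 * m + 4 * k + 1 := by rw [hQd, hk, hm]; ring
  have hkq : 1 ≤ k := by omega
  -- characteristic facts
  have h2F : ringChar F ≠ 2 := by
    intro h
    have := FiniteField.even_card_iff_char_two.mp h
    rw [hF] at this; omega
  have h2F2 : ringChar F2 ≠ 2 := by
    intro h
    have := FiniteField.even_card_iff_char_two.mp h
    rw [hF2] at this; omega
  have hne1 : (-1 : F2) ≠ 1 := Ring.neg_one_ne_one_of_char_ne_two h2F2
  -- arithmetic helpers
  have e1 : q - 1 = 2 * k := by omega
  have e2 : (q + 1) / 2 = k + 1 := by omega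
  have hc2 : (q - 1) * ((q + 1) / 2) = 2 * m + 2 * k := by rw [e1, e2, hm]; ring
  have hcard2 : Fintype.card F2 / 2 = (q - 1) * ((q + 1) / 2) := by rw [hF2, hc2]; omega
  have hhalfpow : (q + 1) / 2 * (q - 1) = (Q - 1) / 2 := by
    rw [e2, e1]
    have : (k + 1) * (2 * k) = 2 * (k * k) + 2 * k := by ring
    rw [this, ← hm]; omega
  -- order of ω
  have hord : orderOf ω = Q - 1 := by
    rw [orderOf_eq_card_of_forall_mem_zpowers hω, Nat.card_units, Nat.card_eq_fintype_card, hF2]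
  have h1 : ((ω : F2)) ^ (Q - 1) = 1 := by
    have h : ω ^ (Q - 1) = 1 := by rw [← hord]; exact pow_orderOf_eq_one ω
    have := congrArg Units.val h
    simpa using this
  have hm1 : ((ω : F2)) ^ ((Q - 1) / 2) = -1 := by
    have hsq : ((ω : F2)) ^ ((Q - 1) / 2) * ((ω : F2)) ^ ((Q - 1) / 2) = 1 := by
      rw [← pow_add]
      have : (Q - 1) / 2 + (Q - 1) / 2 = Q - 1 := by omega
      rw [this, h1]
    rcases mul_self_eq_one_iff.mp hsq with h | h
    · exfalso
      have hu : ω ^ ((Q - 1) / 2) = 1 := Units.ext (by simpa using h)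
      have hle := orderOf_le_of_pow_eq_one (by omega : 0 < (Q - 1) / 2) hu
      rw [hord] at hle; omega
    · exact h
  -- the element c
  set c : F2 := ((ω ^ ((q + 1) / 2) : F2ˣ) : F2) with hcdef
  have hcne : c ≠ 0 := Units.ne_zero _
  have hcpow : c ^ (q - 1) = -1 := by
    rw [hcdef]
    have : ((ω ^ ((q + 1) / 2) : F2ˣ) : F2) = ((ω : F2)) ^ ((q + 1) / 2) := by
      simp
    rw [this, ← pow_mul, hhalfpow, hm1]
  have hcq : c ^ q = -c := by
    have h : c ^ q = c ^ (q - 1) * c := by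
      rw [← pow_succ]
      congr 1
      omega
    rw [h, hcpow]; ring
  -- Frobenius on F
  have frobF : ∀ y : F, y ^ q = y := fun y => by
    have := FiniteField.pow_card y
    rwa [hF] at this
  have hinj : Function.Injective (algebraMap F F2) := (algebraMap F F2).injective
  have halg : ∀ v : F, (algebraMap F F2 v) ^ q = algebraMap F F2 v := by
    intro v; rw [← map_pow, frobF]
  have hlin : ∀ (v : F) (z : F2), tr (algebraMap F F2 v * z) = v * tr z := by
    intro v z
    apply hinj
    rw [htr, map_mul, htr, mul_pow, halg]
    ring
  -- elements of F are squares in F2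
  have hFsq : ∀ y : F, y ≠ 0 → IsSquare (algebraMap F F2 y) := by
    intro y hy
    have hy2 : algebraMap F F2 y ≠ 0 := fun h => hy (hinj (by rw [h, map_zero]))
    rw [FiniteField.isSquare_iff h2F2 hy2, hcard2, pow_mul, ← map_pow]
    have h1 : y ^ (q - 1) = 1 := by
      have := FiniteField.pow_card_sub_one_eq_one y hy
      rwa [hF] at this
    rw [h1, map_one, one_pow]
  -- nonsquares have nonzero trace
  have htrne : ∀ x : F2, x ≠ 0 → ¬ IsSquare x → tr (x * c) ≠ 0 := by
    intro x hx hns h0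
    apply hns
    have h1 : x * c + (x * c) ^ q = 0 := by
      rw [← htr, h0, map_zero]
    have h2 : x ^ q = x := by
      have h3 : x ^ q * c ^ q = -(x * c) := by
        rw [mul_pow] at h1
        linear_combination h1
      rw [hcq] at h3
      have h4 : x ^ q * c = x * c := by linear_combination -h3
      exact mul_right_cancel₀ hcne h4
    have h3 : x ^ (q - 1) = 1 := by
      have h4 : x ^ (q - 1) * x = 1 * x := by
        rw [← pow_succ]
        have : q - 1 + 1 = q := by omega
        rw [this, h2, one_mul]
      exact mul_right_cancel₀ hx h4
    rw [FiniteField.isSquare_iff h2F2 hx, hcard2, pow_mul, h3, one_pow]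
  -- ω is a nonsquare
  have hhalfQ : Fintype.card F2 / 2 = (Q - 1) / 2 := by rw [hF2]; omega
  have hωns : ¬ IsSquare ((ω : F2)) := by
    intro hs
    rw [FiniteField.isSquare_iff h2F2 (Units.ne_zero ω), hhalfQ, hm1] at hs
    exact hne1 hs
  -- counting machinery
  have key : ∀ (A B : Set F2) (f : F2 → F2), Function.Injective f →
      Set.MapsTo f A B → Set.MapsTo f B A → A.ncard = B.ncard := by
    intro A B f hf h1 h2
    apply le_antisymm
    · rw [← Set.ncard_image_of_injective A hf]
      exact Set.ncard_le_ncard (Set.mapsTo_iff_image_subset.mp h1) B.toFinite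
    · rw [← Set.ncard_image_of_injective B hf]
      exact Set.ncard_le_ncard (Set.mapsTo_iff_image_subset.mp h2) A.toFinite
  set A : Set F2 := {x : F2 | (x ≠ 0 ∧ ¬ IsSquare x) ∧
      (tr (x * c) ≠ 0 ∧ IsSquare (tr (x * c)))} with hAdef
  set B : Set F2 := {x : F2 | (x ≠ 0 ∧ ¬ IsSquare x) ∧
      (tr (x * c) ≠ 0 ∧ ¬ IsSquare (tr (x * c)))} with hBdef
  set N : Set F2 := {x : F2 | x ≠ 0 ∧ ¬ IsSquare x} with hNdef
  set S : Set F2 := {x : F2 | x ≠ 0 ∧ IsSquare x} with hSdef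
  -- the nonsquare v of F
  obtain ⟨v, hv⟩ := FiniteField.exists_nonsquare (F := F) h2F
  have hv0 : v ≠ 0 := by rintro rfl; exact hv IsSquare.zero
  set V : F2 := algebraMap F F2 v with hVdef
  have hV0 : V ≠ 0 := fun h => hv0 (hinj (by rw [← hVdef, h, map_zero]))
  have hVsq : IsSquare V := hFsq v hv0
  -- A and B have the same size
  have hmapsV : ∀ x : F2, x ∈ N → (x * V ∈ N ∧ ∀ b : Prop,
      (tr (x * c) ≠ 0 ∧ (IsSquare (tr (x * c)) ↔ b)) →
        (tr (x * V * c) ≠ 0 ∧ (IsSquare (tr (x * V * c)) ↔ ¬ b))) := by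
    intro x hx
    obtain ⟨hx0, hxns⟩ := hx
    have hxV0 : x * V ≠ 0 := mul_ne_zero hx0 hV0
    have hxVns : ¬ IsSquare (x * V) := by
      rw [aux_mul_sq h2F2 hx0 hV0]
      intro h
      exact hxns (h.mpr hVsq)
    refine ⟨⟨hxV0, hxVns⟩, ?_⟩
    intro b ⟨ht0, hts⟩
    have hrw : x * V * c = V * (x * c) := by ring
    rw [hrw, hVdef, hlin]
    refine ⟨mul_ne_zero hv0 ht0, ?_⟩
    rw [aux_mul_sq h2F hv0 ht0]
    constructor
    · intro h hb
      exact hv (h.mpr (hts.mpr hb))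
    · intro hb
      constructor
      · intro h; exact absurd h hv
      · intro h; exact absurd (hts.mp h) hb
  have hAB : A.ncard = B.ncard := by
    apply key A B (· * V) (mul_left_injective₀ hV0)
    · rintro x ⟨hxN, ht0, hts⟩
      obtain ⟨h1, h2⟩ := hmapsV x hxN
      have := h2 True ⟨ht0, by simpa using hts⟩
      exact ⟨h1, this.1, by simpa using this.2⟩
    · rintro x ⟨hxN, ht0, hts⟩
      obtain ⟨h1, h2⟩ := hmapsV x hxN
      have := h2 False ⟨ht0, by simpa using hts⟩
      exact ⟨h1, this.1, by simpa using this.2⟩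
  -- S and N have the same size
  have hSN : S.ncard = N.ncard := by
    apply key S N (· * (ω : F2)) (mul_left_injective₀ (Units.ne_zero ω))
    · rintro x ⟨hx0, hxs⟩
      refine ⟨mul_ne_zero hx0 (Units.ne_zero ω), ?_⟩
      rw [aux_mul_sq h2F2 hx0 (Units.ne_zero ω)]
      intro h
      exact hωns (h.mp hxs)
    · rintro x ⟨hx0, hxs⟩
      refine ⟨mul_ne_zero hx0 (Units.ne_zero ω), ?_⟩
      rw [aux_mul_sq h2F2 hx0 (Units.ne_zero ω)]
      exact ⟨fun h => absurd h hxs, fun h => absurd h hωns⟩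
  -- N splits into A and B
  have hNcard : N.ncard = A.ncard + B.ncard := by
    have hdisj : Disjoint A B := by
      rw [Set.disjoint_left]
      rintro x ⟨_, _, h⟩ ⟨_, _, h'⟩
      exact h' h
    have hunion : A ∪ B = N := by
      ext x
      simp only [hAdef, hBdef, hNdef, Set.mem_union, Set.mem_setOf_eq]
      constructor
      · rintro (⟨h, _⟩ | ⟨h, _⟩) <;> exact h
      · intro hx
        have ht := htrne x hx.1 hx.2
        by_cases hs : IsSquare (tr (x * c))
        · exact Or.inl ⟨hx, ht, hs⟩
        · exact Or.inr ⟨hx, ht, hs⟩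
    rw [← hunion, Set.ncard_union_eq hdisj A.toFinite B.toFinite]
  -- the nonzero elements split into S and N
  have huniv : S.ncard + N.ncard = Q - 1 := by
    have hdisj : Disjoint S N := by
      rw [Set.disjoint_left]
      rintro x ⟨_, h⟩ ⟨_, h'⟩
      exact h' h
    have hunion : S ∪ N = ({0} : Set F2)ᶜ := by
      ext x
      simp only [hSdef, hNdef, Set.mem_union, Set.mem_setOf_eq, Set.mem_compl_iff,
        Set.mem_singleton_iff]
      constructor
      · rintro (⟨h, _⟩ | ⟨h, _⟩) <;> exact h
      · intro hx
        by_cases hs : IsSquare x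
        · exact Or.inl ⟨hx, hs⟩
        · exact Or.inr ⟨hx, hs⟩
    have hcompl := Set.ncard_add_ncard_compl ({0} : Set F2)
    have h0 : ({0} : Set F2).ncard = 1 := Set.ncard_singleton 0
    have hcardQ : Nat.card F2 = Q := by rw [Nat.card_eq_fintype_card, hF2]
    rw [← Set.ncard_union_eq hdisj S.toFinite N.toFinite, hunion]
    omega
  constructor
  · show A.ncard = (Q - 1) / 4
    have h4 : Q - 1 = 4 * A.ncard := by omega
    omega
  · show B.ncard = (Q - 1) / 4
    have h4 : Q - 1 = 4 * B.ncard := by omega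
    omega
end

section
/- Let m be a positive integer such that q = 2m² + 2m + 1 is a prime power, and let C := C_0^{(2,q)} be the set of nonzero squares of F_q. Suppose D₀, D₁ ⊆ F_q satisfy |D₀| = m², |D₁| = m² + m, and for every j ∈ F_q: |D₀ ∩ ((C∪{0}) + j)| + |D₁ ∩ (C + j)| ∈ {m², m²+1, m²+m, m²+m+1} and |D₀ ∩ (C + j)| + |D₁ ∩ ((F_q∖(C∪{0})) + j)| ∈ {m²−1, m², m²+m−1, m²+m}. Then there exists an Hadamard matrix of order n = 4(m² + m + 1) each of whose row sums equals either 2m − 2 or 2m + 2. -/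
open Finset

set_option linter.unusedSectionVars false
namespace Stmt13Aux

variable {F : Type} [Field F] [Fintype F] [DecidableEq F]

lemma sum_char_shift (h2 : ringChar F ≠ 2) {c : F} (hc : c ≠ 0) :
    ∑ z : F, quadraticChar F z * quadraticChar F (z + c) = -1 := by
  have step1 : ∑ z : F, quadraticChar F z * quadraticChar F (z + c)
      = ∑ z ∈ univ.erase (0 : F), quadraticChar F (1 + c * z⁻¹) := by
    rw [← Finset.sum_erase_add _ _ (Finset.mem_univ (0:F)), quadraticChar_zero, zero_mul, add_zero]
    refine Finset.sum_congr rfl fun z hz => ?_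
    have hz0 : z ≠ 0 := (Finset.mem_erase.mp hz).1
    have hzc : z + c = z * (1 + c * z⁻¹) := by field_simp
    rw [hzc, map_mul]
    have : quadraticChar F z * quadraticChar F z = 1 := by
      rw [← sq]; exact quadraticChar_sq_one hz0
    rw [← mul_assoc, this, one_mul]
  rw [step1]
  have step2 : ∑ z ∈ univ.erase (0 : F), quadraticChar F (1 + c * z⁻¹)
      = ∑ w ∈ univ.erase (1 : F), quadraticChar F w := by
    refine Finset.sum_nbij' (fun z => 1 + c * z⁻¹) (fun w => c * (w - 1)⁻¹) ?_ ?_ ?_ ?_ ?_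
    · intro z hz
      have hz0 : z ≠ 0 := (Finset.mem_erase.mp hz).1
      simp only [Finset.mem_erase, Finset.mem_univ, and_true]
      intro h
      have : c * z⁻¹ = 0 := by linear_combination h
      simp [hc, hz0] at this
    · intro w hw
      have hw1 : w ≠ 1 := (Finset.mem_erase.mp hw).1
      simp only [Finset.mem_erase, Finset.mem_univ, and_true]
      have : w - 1 ≠ 0 := sub_ne_zero.mpr hw1
      simp [hc, this]
    · intro z hz
      have hz0 : z ≠ 0 := (Finset.mem_erase.mp hz).1
      field_simp
      simp [hc]
    · intro w hw
      have hw1 : w ≠ 1 := (Finset.mem_erase.mp hw).1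
      have : w - 1 ≠ 0 := sub_ne_zero.mpr hw1
      field_simp
      ring
    · intro z _; rfl
  rw [step2]
  have h3 : ∑ w ∈ univ.erase (1 : F), quadraticChar F w + quadraticChar F 1 = 0 := by
    rw [Finset.sum_erase_add _ _ (Finset.mem_univ (1:F))]
    exact quadraticChar_sum_zero h2
  have h4 : quadraticChar F (1 : F) = 1 := by simp
  linarith

lemma sum_char_two (h2 : ringChar F ≠ 2) {x y : F} (hxy : x ≠ y) :
    ∑ z : F, quadraticChar F (z - x) * quadraticChar F (z - y) = -1 := by
  have := sum_char_shift h2 (c := y - x) (sub_ne_zero.mpr (Ne.symm hxy))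
  rw [← this]
  exact Fintype.sum_equiv (Equiv.subRight y) _ _ (fun z => by simp [sub_sub_eq_add_sub]; ring_nf)

open Matrix
variable (F : Type) [Field F] [Fintype F] [DecidableEq F]

/-- Paley conference matrix (bordered). -/
def S : Matrix (Option F) (Option F) ℤ :=
  Matrix.of fun i j =>
    match i, j with
    | none, none => 0
    | none, some _ => 1
    | some _, none => 1
    | some x, some y => quadraticChar F (y - x)

variable {F}

lemma S_symm (hsq : IsSquare (-1 : F)) : (S F)ᵀ = S F := by
  ext i j
  match i, j with
  | none, none => rfl
  | none, some x => rfl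
  | some x, none => rfl
  | some x, some y =>
    show quadraticChar F (x - y) = quadraticChar F (y - x)
    have h1 : quadraticChar F (-1 : F) = 1 := by
      rw [quadraticChar_one_iff_isSquare (by simp)]; exact hsq
    calc quadraticChar F (x - y) = quadraticChar F ((-1) * (y - x)) := by ring_nf
      _ = quadraticChar F (-1) * quadraticChar F (y - x) := map_mul _ _ _
      _ = quadraticChar F (y - x) := by rw [h1, one_mul]

lemma S_mul_S (h2 : ringChar F ≠ 2) :
    S F * (S F)ᵀ = (Fintype.card F : ℤ) • 1 := by
  ext i k
  rw [Matrix.mul_apply]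
  match i, k with
  | none, none =>
    simp only [Fintype.sum_option, transpose_apply]
    show (0 * 0 + ∑ x : F, (1:ℤ) * 1) = _
    simp [Fintype.card_option]
  | none, some y =>
    simp only [Fintype.sum_option, transpose_apply]
    show (0 * 1 + ∑ x : F, 1 * quadraticChar F (x - y)) = _
    have h0 : ∑ x : F, quadraticChar F (x - y) = 0 := by
      rw [← quadraticChar_sum_zero h2]
      exact Fintype.sum_equiv (Equiv.subRight y) _ _ (fun z => rfl)
    simp only [zero_mul, one_mul, zero_add]
    rw [h0, Matrix.smul_apply, Matrix.one_apply_ne (by simp)]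
    simp
  | some x, none =>
    simp only [Fintype.sum_option, transpose_apply]
    show (1 * 0 + ∑ z : F, quadraticChar F (z - x) * 1) = _
    have h0 : ∑ z : F, quadraticChar F (z - x) = 0 := by
      rw [← quadraticChar_sum_zero h2]
      exact Fintype.sum_equiv (Equiv.subRight x) _ _ (fun z => rfl)
    simp only [mul_zero, mul_one, zero_add]
    rw [h0, Matrix.smul_apply, Matrix.one_apply_ne (by simp)]
    simp
  | some x, some y =>
    simp only [Fintype.sum_option, transpose_apply]
    show (1 * 1 + ∑ z : F, quadraticChar F (z - x) * quadraticChar F (z - y)) = _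
    by_cases hxy : x = y
    · subst hxy
      have : ∀ z : F, quadraticChar F (z - x) * quadraticChar F (z - x)
          = if z = x then 0 else 1 := by
        intro z
        by_cases hz : z = x
        · simp [hz, quadraticChar_zero]
        · rw [← sq, quadraticChar_sq_one (sub_ne_zero.mpr hz)]; simp [hz]
      rw [Finset.sum_congr rfl fun z _ => this z]
      have hcd : ∑ z : F, (if z = x then (0:ℤ) else 1) = (Fintype.card F : ℤ) - 1 := by
        have e1 : ∀ z : F, (if z = x then (0:ℤ) else 1) = 1 - (if z = x then 1 else 0) := by
          intro z; split <;> ring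
        rw [Finset.sum_congr rfl fun z _ => e1 z, Finset.sum_sub_distrib]
        simp [Finset.card_univ]
      rw [hcd, Matrix.smul_apply, Matrix.one_apply_eq]
      simp
    · rw [sum_char_two h2 hxy]
      rw [Matrix.smul_apply, Matrix.one_apply_ne (by simp [hxy])]
      simp
section T3
open Finset
variable {F : Type} [Field F] [Fintype F] [DecidableEq F]

lemma ncard_filter_eq (D : Set F) [DecidablePred (· ∈ D)] :
    D.ncard = (Finset.univ.filter (· ∈ D)).card := by
  rw [← Set.ncard_coe_finset]; congr 1; ext x; simp

lemma sum_sign_mul (D : Set F) [DecidablePred (· ∈ D)] (ψ : F → ℤ)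
    (hψ : ∀ x, ψ x = 1 ∨ ψ x = -1) :
    ∑ x : F, (if x ∈ D then (-1:ℤ) else 1) * ψ x
      = (∑ x : F, ψ x) - 4 * ((D ∩ {x | ψ x = 1}).ncard : ℤ) + 2 * (D.ncard : ℤ) := by
  classical
  have h1 : ∀ x, (if x ∈ D then (-1:ℤ) else 1) * ψ x
      = ψ x - 2 * (if x ∈ D then ψ x else 0) := by
    intro x; split <;> ring
  rw [Finset.sum_congr rfl fun x _ => h1 x, Finset.sum_sub_distrib, ← Finset.mul_sum,
    ← Finset.sum_filter (fun x => x ∈ D) ψ]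
  have h2 : ∀ x ∈ Finset.univ.filter (· ∈ D),
      ψ x = 2 * (if ψ x = 1 then (1:ℤ) else 0) - 1 := by
    intro x _; rcases hψ x with h | h <;> simp [h]
  have key : ∑ x ∈ Finset.univ.filter (· ∈ D), ψ x
      = 2 * (((Finset.univ.filter (· ∈ D)).filter (fun x => ψ x = 1)).card : ℤ)
        - (D.ncard : ℤ) := by
    rw [Finset.sum_congr rfl h2, Finset.sum_sub_distrib, ← Finset.mul_sum, Finset.sum_boole,
      Finset.sum_const, ncard_filter_eq D]
    simp
  have hh : ((D ∩ {x | ψ x = 1}).ncard : ℤ)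
      = (((Finset.univ.filter (· ∈ D)).filter (fun x => ψ x = 1)).card : ℤ) := by
    congr 1
    rw [← Set.ncard_coe_finset]; congr 1; ext x
    simp [Set.mem_inter_iff]
  rw [key, hh]; ring

lemma inter_image_eq (D A : Set F) (j : F) :
    (D ∩ ((fun x => x + j) '' A)) = (D ∩ {x | x - j ∈ A}) := by
  congr 1
  ext x
  constructor
  · rintro ⟨a, ha, rfl⟩; simpa using ha
  · intro hx; exact ⟨x - j, hx, by ring⟩

lemma sum_char_row (h2 : ringChar F ≠ 2) (j : F) :
    ∑ x : F, quadraticChar F (x - j) = 0 := by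
  rw [← quadraticChar_sum_zero h2]
  exact Fintype.sum_equiv (Equiv.subRight j) _ _ (fun z => rfl)

end T3

section T4
open Finset Matrix
variable {F : Type} [Field F] [Fintype F] [DecidableEq F]

variable (F) in
def H0 : Matrix (Option F ⊕ Option F) (Option F ⊕ Option F) ℤ :=
  Matrix.fromBlocks (S F + 1) (S F - 1) (S F - 1) (-(S F) - 1)

lemma H0_mul (h2 : ringChar F ≠ 2) (hsq : IsSquare (-1 : F)) :
    H0 F * (H0 F)ᵀ = ((2 * Fintype.card F + 2 : ℤ)) • 1 := by
  have hS : (S F)ᵀ = S F := S_symm hsq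
  have hSS : S F * S F = (Fintype.card F : ℤ) • 1 := by
    have := S_mul_S (F := F) h2
    rwa [hS] at this
  rw [H0, Matrix.fromBlocks_transpose, Matrix.fromBlocks_multiply]
  rw [transpose_sub, transpose_add, transpose_one, hS]
  have hne : (-S F - 1)ᵀ = -S F - 1 := by
    rw [transpose_sub, transpose_neg, transpose_one, hS]
  rw [hne]
  have e1 : (S F + 1) * (S F + 1) + (S F - 1) * (S F - 1)
      = ((2 * Fintype.card F + 2 : ℤ)) • 1 := by
    have : (S F + 1) * (S F + 1) + (S F - 1) * (S F - 1)
        = 2 * (S F * S F) + 2 * 1 := by noncomm_ring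
    rw [this, hSS]
    simp only [zsmul_eq_mul]
    push_cast
    noncomm_ring
    simp
  have e2 : (S F + 1) * (S F - 1) + (S F - 1) * (-(S F) - 1) = 0 := by noncomm_ring
  have e3 : (S F - 1) * (S F + 1) + (-(S F) - 1) * (S F - 1) = 0 := by noncomm_ring
  have e4 : (S F - 1) * (S F - 1) + (-(S F) - 1) * (-(S F) - 1)
      = ((2 * Fintype.card F + 2 : ℤ)) • 1 := by
    have : (S F - 1) * (S F - 1) + (-(S F) - 1) * (-(S F) - 1)
        = 2 * (S F * S F) + 2 * 1 := by noncomm_ring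
    rw [this, hSS]
    simp only [zsmul_eq_mul]
    push_cast
    noncomm_ring
    simp
  rw [e1, e2, e3, e4, ← Matrix.fromBlocks_one, Matrix.fromBlocks_smul]
  simp

end T4

section T5
open Finset Matrix
variable {F : Type} [Field F] [Fintype F] [DecidableEq F]

lemma sum_ind (j : F) : ∑ x : F, (if x = j then (1:ℤ) else 0) = 1 := by
  rw [Finset.sum_ite_eq' Finset.univ j (fun _ => (1:ℤ))]
  simp

section withC
variable (C : Set F) (hC : C = {x : F | x ≠ 0 ∧ IsSquare x})
include hC

lemma f0_eq (j x : F) [Decidable (x - j ∈ C ∪ {0})] :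
    (if x - j ∈ C ∪ {0} then (1:ℤ) else -1)
      = quadraticChar F (x - j) + (if x = j then 1 else 0) := by
  by_cases hx : x = j
  · subst hx
    simp [hC, quadraticChar_zero]
  · have hne : x - j ≠ 0 := sub_ne_zero.mpr hx
    rcases quadraticChar_dichotomy hne with h | h
    · have hsq : IsSquare (x - j) := (quadraticChar_one_iff_isSquare hne).mp h
      rw [if_pos (by simp [hC, hne, hsq]), h, if_neg hx]
      ring
    · have hsq : ¬IsSquare (x - j) := by
        intro hs
        rw [(quadraticChar_one_iff_isSquare hne).mpr hs] at h
        norm_num at h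
      rw [if_neg (by simp [hC, hne, hsq]), h, if_neg hx]
      ring

lemma f1_eq (j x : F) [Decidable (x - j ∈ C)] :
    (if x - j ∈ C then (1:ℤ) else -1)
      = quadraticChar F (x - j) - (if x = j then 1 else 0) := by
  by_cases hx : x = j
  · subst hx
    simp [hC, quadraticChar_zero]
  · have hne : x - j ≠ 0 := sub_ne_zero.mpr hx
    rcases quadraticChar_dichotomy hne with h | h
    · have hsq : IsSquare (x - j) := (quadraticChar_one_iff_isSquare hne).mp h
      rw [if_pos (by simp [hC, hne, hsq]), h, if_neg hx]
      ring
    · have hsq : ¬IsSquare (x - j) := by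
        intro hs
        rw [(quadraticChar_one_iff_isSquare hne).mpr hs] at h
        norm_num at h
      rw [if_neg (by simp [hC, hne, hsq]), h, if_neg hx]
      ring

lemma f2_eq (j x : F) [Decidable (x - j ∈ Set.univ \ (C ∪ {0}))] :
    (if x - j ∈ Set.univ \ (C ∪ {0}) then (1:ℤ) else -1)
      = -quadraticChar F (x - j) - (if x = j then 1 else 0) := by
  by_cases hx : x = j
  · subst hx
    simp [hC, quadraticChar_zero]
  · have hne : x - j ≠ 0 := sub_ne_zero.mpr hx
    rcases quadraticChar_dichotomy hne with h | h
    · have hsq : IsSquare (x - j) := (quadraticChar_one_iff_isSquare hne).mp h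
      rw [if_neg (by simp [hC, hne, hsq]), h, if_neg hx]
      ring
    · have hsq : ¬IsSquare (x - j) := by
        intro hs
        rw [(quadraticChar_one_iff_isSquare hne).mpr hs] at h
        norm_num at h
      rw [if_pos (by simp [hC, hne, hsq]), h, if_neg hx]
      ring

lemma sum_f0 (h2 : ringChar F ≠ 2) (j : F) [DecidablePred (· ∈ C ∪ ({0} : Set F))] :
    ∑ x : F, (if x - j ∈ C ∪ {0} then (1:ℤ) else -1) = 1 := by
  rw [Finset.sum_congr rfl fun x _ => f0_eq C hC j x, Finset.sum_add_distrib,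
    sum_char_row h2 j, sum_ind j]
  norm_num

lemma sum_f1 (h2 : ringChar F ≠ 2) (j : F) [DecidablePred (· ∈ C)] :
    ∑ x : F, (if x - j ∈ C then (1:ℤ) else -1) = -1 := by
  rw [Finset.sum_congr rfl fun x _ => f1_eq C hC j x, Finset.sum_sub_distrib,
    sum_char_row h2 j, sum_ind j]
  norm_num

lemma sum_f2 (h2 : ringChar F ≠ 2) (j : F) [DecidablePred (· ∈ Set.univ \ (C ∪ ({0} : Set F)))] :
    ∑ x : F, (if x - j ∈ Set.univ \ (C ∪ {0}) then (1:ℤ) else -1) = -1 := by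
  have : ∀ x : F, (if x - j ∈ Set.univ \ (C ∪ {0}) then (1:ℤ) else -1)
      = -quadraticChar F (x - j) - (if x = j then 1 else 0) := fun x => f2_eq C hC j x
  rw [Finset.sum_congr rfl fun x _ => this x, Finset.sum_sub_distrib, Finset.sum_neg_distrib,
    sum_char_row h2 j, sum_ind j]
  norm_num

end withC

lemma sum_block (D A : Set F) [DecidablePred (· ∈ D)] [DecidablePred (· ∈ A)] (j : F) :
    ∑ x : F, (if x - j ∈ A then (1:ℤ) else -1) * (if x ∈ D then (-1:ℤ) else 1)
      = (∑ x : F, if x - j ∈ A then (1:ℤ) else -1)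
        - 4 * ((D ∩ ((fun x => x + j) '' A)).ncard : ℤ) + 2 * (D.ncard : ℤ) := by
  have h := sum_sign_mul D (fun x => if x - j ∈ A then (1:ℤ) else -1)
    (fun x => by by_cases hx : x - j ∈ A <;> simp [hx])
  rw [Finset.sum_congr rfl fun x _ => mul_comm (if x - j ∈ A then (1:ℤ) else -1) _, h]
  have hset : {x : F | (if x - j ∈ A then (1:ℤ) else -1) = 1} = {x : F | x - j ∈ A} := by
    ext x
    simp only [Set.mem_setOf_eq]
    split <;> rename_i hcond
    · simp [hcond]
    · norm_num [hcond]
  rw [hset, ← inter_image_eq D A j]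

lemma sum_sign_only (D : Set F) [DecidablePred (· ∈ D)] :
    ∑ x : F, (if x ∈ D then (-1:ℤ) else 1) = (Fintype.card F : ℤ) - 2 * (D.ncard : ℤ) := by
  have h1 : ∀ x : F, (if x ∈ D then (-1:ℤ) else 1) = 1 - 2 * (if x ∈ D then 1 else 0) := by
    intro x; split <;> ring
  rw [Finset.sum_congr rfl fun x _ => h1 x, Finset.sum_sub_distrib, ← Finset.mul_sum,
    Finset.sum_boole, Finset.sum_const, ncard_filter_eq D]
  simp

end T5

section T6
open Finset Matrix
variable {F : Type} [Field F] [Fintype F] [DecidableEq F]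

@[simp] lemma S_none_none : S F none none = 0 := rfl
@[simp] lemma S_none_some (x : F) : S F none (some x) = 1 := rfl
@[simp] lemma S_some_none (x : F) : S F (some x) none = 1 := rfl
@[simp] lemma S_some_some (x y : F) : S F (some x) (some y) = quadraticChar F (y - x) := rfl

variable (D₀ D₁ : Set F) [DecidablePred (· ∈ D₀)] [DecidablePred (· ∈ D₁)]

def dsgn : Option F ⊕ Option F → ℤ
  | Sum.inl none => 1
  | Sum.inl (some x) => if x ∈ D₀ then -1 else 1
  | Sum.inr none => 1
  | Sum.inr (some x) => if x ∈ D₁ then -1 else 1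

def Trow (i : Option F ⊕ Option F) : ℤ := ∑ u, H0 F i u * dsgn D₀ D₁ u

def rsgn (i : Option F ⊕ Option F) : ℤ := if 0 ≤ Trow D₀ D₁ i then 1 else -1

def Mmat : Matrix (Option F ⊕ Option F) (Option F ⊕ Option F) ℤ :=
  Matrix.of fun i u => rsgn D₀ D₁ i * (H0 F i u * dsgn D₀ D₁ u)

lemma dsgn_pm (u : Option F ⊕ Option F) : dsgn D₀ D₁ u = 1 ∨ dsgn D₀ D₁ u = -1 := by
  rcases u with (_ | x) | (_ | x) <;> simp [dsgn] <;> exact (em _).symm.imp id id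

lemma rsgn_pm (i : Option F ⊕ Option F) : rsgn D₀ D₁ i = 1 ∨ rsgn D₀ D₁ i = -1 := by
  rw [rsgn]; split <;> simp

lemma H0_pm (i u : Option F ⊕ Option F) : H0 F i u = 1 ∨ H0 F i u = -1 := by
  have hs : ∀ x y : F, x ≠ y → (quadraticChar F (y - x) = 1 ∨ quadraticChar F (y - x) = -1) :=
    fun x y h => quadraticChar_dichotomy (sub_ne_zero.mpr (Ne.symm h))
  simp only [quadraticChar_apply] at hs
  rcases i with (_ | x) | (_ | x) <;> rcases u with (_ | y) | (_ | y) <;>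
    simp only [H0, Matrix.fromBlocks_apply₁₁, Matrix.fromBlocks_apply₁₂,
      Matrix.fromBlocks_apply₂₁, Matrix.fromBlocks_apply₂₂, Matrix.add_apply,
      Matrix.sub_apply, Matrix.neg_apply, Matrix.one_apply, S_none_none, S_none_some,
      S_some_none, S_some_some, quadraticChar_apply] <;>
  first
    | (by_cases hxy : x = y
       · subst hxy; simp [sub_self, quadraticCharFun_zero]
       · rcases hs x y hxy with h | h <;> rw [h] <;> simp [hxy])
    | simp

lemma Mmat_pm (i u : Option F ⊕ Option F) : Mmat D₀ D₁ i u = 1 ∨ Mmat D₀ D₁ i u = -1 := by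
  have h1 := rsgn_pm D₀ D₁ i
  have h2 := H0_pm (F := F) i u
  have h3 := dsgn_pm D₀ D₁ u
  have hM : Mmat D₀ D₁ i u = rsgn D₀ D₁ i * (H0 F i u * dsgn D₀ D₁ u) := rfl
  rw [hM]
  rcases h1 with h1 | h1 <;> rcases h2 with h2 | h2 <;> rcases h3 with h3 | h3 <;>
    rw [h1, h2, h3] <;> norm_num

lemma Mmat_eq_diag : Mmat D₀ D₁
    = Matrix.diagonal (rsgn D₀ D₁) * (H0 F * Matrix.diagonal (dsgn D₀ D₁)) := by
  ext i u
  rw [Matrix.diagonal_mul, Matrix.mul_diagonal]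
  rfl

lemma Mmat_mul (h2 : ringChar F ≠ 2) (hsq : IsSquare (-1 : F)) :
    Mmat D₀ D₁ * (Mmat D₀ D₁)ᵀ = ((2 * Fintype.card F + 2 : ℤ)) • 1 := by
  have hdd : Matrix.diagonal (dsgn D₀ D₁) * Matrix.diagonal (dsgn D₀ D₁) = 1 := by
    rw [Matrix.diagonal_mul_diagonal]
    have : (fun u => dsgn D₀ D₁ u * dsgn D₀ D₁ u) = fun _ => (1:ℤ) := by
      funext u; rcases dsgn_pm D₀ D₁ u with h | h <;> rw [h] <;> norm_num
    rw [this, Matrix.diagonal_one]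
  have hrr : Matrix.diagonal (rsgn D₀ D₁) * Matrix.diagonal (rsgn D₀ D₁) = 1 := by
    rw [Matrix.diagonal_mul_diagonal]
    have : (fun u => rsgn D₀ D₁ u * rsgn D₀ D₁ u) = fun _ => (1:ℤ) := by
      funext u; rcases rsgn_pm D₀ D₁ u with h | h <;> rw [h] <;> norm_num
    rw [this, Matrix.diagonal_one]
  rw [Mmat_eq_diag, Matrix.transpose_mul, Matrix.transpose_mul, Matrix.diagonal_transpose,
    Matrix.diagonal_transpose]
  calc Matrix.diagonal (rsgn D₀ D₁) * (H0 F * Matrix.diagonal (dsgn D₀ D₁)) *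
        (Matrix.diagonal (dsgn D₀ D₁) * (H0 F)ᵀ * Matrix.diagonal (rsgn D₀ D₁))
      = Matrix.diagonal (rsgn D₀ D₁) * (H0 F *
          ((Matrix.diagonal (dsgn D₀ D₁) * Matrix.diagonal (dsgn D₀ D₁)) *
            ((H0 F)ᵀ * Matrix.diagonal (rsgn D₀ D₁)))) := by
        simp only [Matrix.mul_assoc]
    _ = Matrix.diagonal (rsgn D₀ D₁) * ((H0 F * (H0 F)ᵀ) * Matrix.diagonal (rsgn D₀ D₁)) := by
        rw [hdd, Matrix.one_mul, Matrix.mul_assoc]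
    _ = ((2 * Fintype.card F + 2 : ℤ)) • 1 := by
        rw [H0_mul h2 hsq, Matrix.smul_mul, Matrix.one_mul, Matrix.mul_smul, hrr]

lemma Mmat_rowsum (i : Option F ⊕ Option F) :
    ∑ u, Mmat D₀ D₁ i u = rsgn D₀ D₁ i * Trow D₀ D₁ i := by
  rw [Trow, Finset.mul_sum]
  rfl

lemma sign_step {m : ℕ} (hm : 0 < m) {T : ℤ}
    (h : T = 2*(m:ℤ)+2 ∨ T = 2*(m:ℤ)-2 ∨ T = -(2*(m:ℤ))+2 ∨ T = -(2*(m:ℤ))-2) :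
    (if 0 ≤ T then (1:ℤ) else -1) * T = 2*(m:ℤ) - 2
      ∨ (if 0 ≤ T then (1:ℤ) else -1) * T = 2*(m:ℤ) + 2 := by
  split <;> rename_i h' <;> rcases h with h|h|h|h <;> subst h <;> omega

end T6

section T7
open Finset Matrix
variable {F : Type} [Field F] [Fintype F] [DecidableEq F]
variable (C : Set F) (hC : C = {x : F | x ≠ 0 ∧ IsSquare x})
variable (D₀ D₁ : Set F) [DecidablePred (· ∈ D₀)] [DecidablePred (· ∈ D₁)]
variable [DecidablePred (· ∈ C)] [DecidablePred (· ∈ C ∪ ({0} : Set F))]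
  [DecidablePred (· ∈ Set.univ \ (C ∪ ({0} : Set F)))]

include hC in
lemma entry_SP (j x : F) :
    (S F + 1) (some j) (some x) = if x - j ∈ C ∪ {0} then (1:ℤ) else -1 := by
  rw [f0_eq C hC j x, Matrix.add_apply, S_some_some, Matrix.one_apply]
  by_cases h : x = j
  · subst h; simp
  · have h' : ¬ j = x := fun hh => h hh.symm
    simp [h, h']

include hC in
lemma entry_SM (j x : F) :
    (S F - 1) (some j) (some x) = if x - j ∈ C then (1:ℤ) else -1 := by
  rw [f1_eq C hC j x, Matrix.sub_apply, S_some_some, Matrix.one_apply]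
  by_cases h : x = j
  · subst h; simp
  · have h' : ¬ j = x := fun hh => h hh.symm
    simp [h, h']

include hC in
lemma entry_NS (j x : F) :
    (-(S F) - 1) (some j) (some x)
      = if x - j ∈ Set.univ \ (C ∪ {0}) then (1:ℤ) else -1 := by
  rw [f2_eq C hC j x, Matrix.sub_apply, Matrix.neg_apply, S_some_some, Matrix.one_apply]
  by_cases h : x = j
  · subst h; simp
  · have h' : ¬ j = x := fun hh => h hh.symm
    simp [h, h']

include hC in
lemma Trow_inl_some (h2 : ringChar F ≠ 2) (j : F) :
    Trow D₀ D₁ (Sum.inl (some j))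
      = 2 + 2 * (D₀.ncard : ℤ) + 2 * (D₁.ncard : ℤ)
        - 4 * (((D₀ ∩ ((fun x => x + j) '' (C ∪ {0}))).ncard : ℤ)
               + ((D₁ ∩ ((fun x => x + j) '' C)).ncard : ℤ)) := by
  rw [Trow, Fintype.sum_sum_type,
    Fintype.sum_option (fun k => H0 F (Sum.inl (some j)) (Sum.inl k) * dsgn D₀ D₁ (Sum.inl k)),
    Fintype.sum_option (fun k => H0 F (Sum.inl (some j)) (Sum.inr k) * dsgn D₀ D₁ (Sum.inr k))]
  have e1 : H0 F (Sum.inl (some j)) (Sum.inl none) * dsgn D₀ D₁ (Sum.inl none) = 1 := by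
    show (S F + 1) (some j) none * 1 = 1
    rw [Matrix.add_apply, S_some_none, Matrix.one_apply_ne (by simp)]
    norm_num
  have e2 : ∀ x : F, H0 F (Sum.inl (some j)) (Sum.inl (some x)) * dsgn D₀ D₁ (Sum.inl (some x))
      = (if x - j ∈ C ∪ {0} then (1:ℤ) else -1) * (if x ∈ D₀ then (-1:ℤ) else 1) := by
    intro x
    show (S F + 1) (some j) (some x) * (if x ∈ D₀ then (-1:ℤ) else 1) = _
    rw [entry_SP C hC j x]
  have e3 : H0 F (Sum.inl (some j)) (Sum.inr none) * dsgn D₀ D₁ (Sum.inr none) = 1 := by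
    show (S F - 1) (some j) none * 1 = 1
    rw [Matrix.sub_apply, S_some_none, Matrix.one_apply_ne (by simp)]
    norm_num
  have e4 : ∀ x : F, H0 F (Sum.inl (some j)) (Sum.inr (some x)) * dsgn D₀ D₁ (Sum.inr (some x))
      = (if x - j ∈ C then (1:ℤ) else -1) * (if x ∈ D₁ then (-1:ℤ) else 1) := by
    intro x
    show (S F - 1) (some j) (some x) * (if x ∈ D₁ then (-1:ℤ) else 1) = _
    rw [entry_SM C hC j x]
  rw [e1, e3, Finset.sum_congr rfl fun x _ => e2 x, Finset.sum_congr rfl fun x _ => e4 x,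
    sum_block D₀ (C ∪ {0}) j, sum_block D₁ C j, sum_f0 C hC h2 j, sum_f1 C hC h2 j]
  ring

include hC in
lemma Trow_inr_some (h2 : ringChar F ≠ 2) (j : F) :
    Trow D₀ D₁ (Sum.inr (some j))
      = -2 + 2 * (D₀.ncard : ℤ) + 2 * (D₁.ncard : ℤ)
        - 4 * (((D₀ ∩ ((fun x => x + j) '' C)).ncard : ℤ)
               + ((D₁ ∩ ((fun x => x + j) '' (Set.univ \ (C ∪ {0})))).ncard : ℤ)) := by
  rw [Trow, Fintype.sum_sum_type,
    Fintype.sum_option (fun k => H0 F (Sum.inr (some j)) (Sum.inl k) * dsgn D₀ D₁ (Sum.inl k)),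
    Fintype.sum_option (fun k => H0 F (Sum.inr (some j)) (Sum.inr k) * dsgn D₀ D₁ (Sum.inr k))]
  have e1 : H0 F (Sum.inr (some j)) (Sum.inl none) * dsgn D₀ D₁ (Sum.inl none) = 1 := by
    show (S F - 1) (some j) none * 1 = 1
    rw [Matrix.sub_apply, S_some_none, Matrix.one_apply_ne (by simp)]
    norm_num
  have e2 : ∀ x : F, H0 F (Sum.inr (some j)) (Sum.inl (some x)) * dsgn D₀ D₁ (Sum.inl (some x))
      = (if x - j ∈ C then (1:ℤ) else -1) * (if x ∈ D₀ then (-1:ℤ) else 1) := by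
    intro x
    show (S F - 1) (some j) (some x) * (if x ∈ D₀ then (-1:ℤ) else 1) = _
    rw [entry_SM C hC j x]
  have e3 : H0 F (Sum.inr (some j)) (Sum.inr none) * dsgn D₀ D₁ (Sum.inr none) = -1 := by
    show (-(S F) - 1) (some j) none * 1 = -1
    rw [Matrix.sub_apply, Matrix.neg_apply, S_some_none, Matrix.one_apply_ne (by simp)]
    norm_num
  have e4 : ∀ x : F, H0 F (Sum.inr (some j)) (Sum.inr (some x)) * dsgn D₀ D₁ (Sum.inr (some x))
      = (if x - j ∈ Set.univ \ (C ∪ {0}) then (1:ℤ) else -1) * (if x ∈ D₁ then (-1:ℤ) else 1) := by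
    intro x
    show (-(S F) - 1) (some j) (some x) * (if x ∈ D₁ then (-1:ℤ) else 1) = _
    rw [entry_NS C hC j x]
  rw [e1, e3, Finset.sum_congr rfl fun x _ => e2 x, Finset.sum_congr rfl fun x _ => e4 x,
    sum_block D₀ C j, sum_block D₁ (Set.univ \ (C ∪ {0})) j, sum_f1 C hC h2 j, sum_f2 C hC h2 j]
  ring

lemma Trow_inl_none :
    Trow D₀ D₁ (Sum.inl none)
      = 2 * (Fintype.card F : ℤ) - 2 * (D₀.ncard : ℤ) - 2 * (D₁.ncard : ℤ) := by
  rw [Trow, Fintype.sum_sum_type,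
    Fintype.sum_option (fun k => H0 F (Sum.inl none) (Sum.inl k) * dsgn D₀ D₁ (Sum.inl k)),
    Fintype.sum_option (fun k => H0 F (Sum.inl none) (Sum.inr k) * dsgn D₀ D₁ (Sum.inr k))]
  have e1 : H0 F (Sum.inl none) (Sum.inl none) * dsgn D₀ D₁ (Sum.inl none) = 1 := by
    show (S F + 1) none none * 1 = 1
    rw [Matrix.add_apply, S_none_none, Matrix.one_apply_eq]
    norm_num
  have e2 : ∀ x : F, H0 F (Sum.inl none) (Sum.inl (some x)) * dsgn D₀ D₁ (Sum.inl (some x))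
      = (if x ∈ D₀ then (-1:ℤ) else 1) := by
    intro x
    show (S F + 1) none (some x) * (if x ∈ D₀ then (-1:ℤ) else 1) = _
    rw [Matrix.add_apply, S_none_some, Matrix.one_apply_ne (by simp)]
    norm_num
  have e3 : H0 F (Sum.inl none) (Sum.inr none) * dsgn D₀ D₁ (Sum.inr none) = -1 := by
    show (S F - 1) none none * 1 = -1
    rw [Matrix.sub_apply, S_none_none, Matrix.one_apply_eq]
    norm_num
  have e4 : ∀ x : F, H0 F (Sum.inl none) (Sum.inr (some x)) * dsgn D₀ D₁ (Sum.inr (some x))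
      = (if x ∈ D₁ then (-1:ℤ) else 1) := by
    intro x
    show (S F - 1) none (some x) * (if x ∈ D₁ then (-1:ℤ) else 1) = _
    rw [Matrix.sub_apply, S_none_some, Matrix.one_apply_ne (by simp)]
    norm_num
  rw [e1, e3, Finset.sum_congr rfl fun x _ => e2 x, Finset.sum_congr rfl fun x _ => e4 x,
    sum_sign_only D₀, sum_sign_only D₁]
  ring

lemma Trow_inr_none :
    Trow D₀ D₁ (Sum.inr none)
      = 2 * (D₁.ncard : ℤ) - 2 * (D₀.ncard : ℤ) - 2 := by
  rw [Trow, Fintype.sum_sum_type,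
    Fintype.sum_option (fun k => H0 F (Sum.inr none) (Sum.inl k) * dsgn D₀ D₁ (Sum.inl k)),
    Fintype.sum_option (fun k => H0 F (Sum.inr none) (Sum.inr k) * dsgn D₀ D₁ (Sum.inr k))]
  have e1 : H0 F (Sum.inr none) (Sum.inl none) * dsgn D₀ D₁ (Sum.inl none) = -1 := by
    show (S F - 1) none none * 1 = -1
    rw [Matrix.sub_apply, S_none_none, Matrix.one_apply_eq]
    norm_num
  have e2 : ∀ x : F, H0 F (Sum.inr none) (Sum.inl (some x)) * dsgn D₀ D₁ (Sum.inl (some x))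
      = (if x ∈ D₀ then (-1:ℤ) else 1) := by
    intro x
    show (S F - 1) none (some x) * (if x ∈ D₀ then (-1:ℤ) else 1) = _
    rw [Matrix.sub_apply, S_none_some, Matrix.one_apply_ne (by simp)]
    norm_num
  have e3 : H0 F (Sum.inr none) (Sum.inr none) * dsgn D₀ D₁ (Sum.inr none) = -1 := by
    show (-(S F) - 1) none none * 1 = -1
    rw [Matrix.sub_apply, Matrix.neg_apply, S_none_none, Matrix.one_apply_eq]
    norm_num
  have e4 : ∀ x : F, H0 F (Sum.inr none) (Sum.inr (some x)) * dsgn D₀ D₁ (Sum.inr (some x))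
      = -(if x ∈ D₁ then (-1:ℤ) else 1) := by
    intro x
    show (-(S F) - 1) none (some x) * (if x ∈ D₁ then (-1:ℤ) else 1) = _
    rw [Matrix.sub_apply, Matrix.neg_apply, S_none_some, Matrix.one_apply_ne (by simp)]
    split <;> norm_num
  rw [e1, e3, Finset.sum_congr rfl fun x _ => e2 x, Finset.sum_congr rfl fun x _ => e4 x,
    Finset.sum_neg_distrib, sum_sign_only D₀, sum_sign_only D₁]
  ring

end T7

end Stmt13Aux




/-- Suitable intersection conditions on a pair `D₀, D₁ ⊆ F_q`,
`q = 2m²+2m+1`, yield a biregular Hadamard matrix of order `4(m²+m+1)` with row sums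
`2m−2` or `2m+2`. -/
theorem stmt_13 (m : ℕ) (hm : 0 < m)
    (F : Type) [Field F] [Fintype F] (hF : Fintype.card F = 2 * m ^ 2 + 2 * m + 1)
    (C : Set F) (hC : C = {x : F | x ≠ 0 ∧ IsSquare x})
    (D₀ D₁ : Set F) (hD₀ : D₀.ncard = m ^ 2) (hD₁ : D₁.ncard = m ^ 2 + m)
    (hint1 : ∀ j : F,
      (D₀ ∩ ((fun x => x + j) '' (C ∪ {0}))).ncard + (D₁ ∩ ((fun x => x + j) '' C)).ncard ∈
        ({m ^ 2, m ^ 2 + 1, m ^ 2 + m, m ^ 2 + m + 1} : Set ℕ))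
    (hint2 : ∀ j : F,
      (D₀ ∩ ((fun x => x + j) '' C)).ncard +
          (D₁ ∩ ((fun x => x + j) '' (Set.univ \ (C ∪ {0})))).ncard ∈
        ({m ^ 2 - 1, m ^ 2, m ^ 2 + m - 1, m ^ 2 + m} : Set ℕ)) :
    ∃ H : Matrix (Fin (4 * (m ^ 2 + m + 1))) (Fin (4 * (m ^ 2 + m + 1))) ℤ,
      (∀ i j, H i j = 1 ∨ H i j = -1) ∧
      H * H.transpose = ((4 * (m ^ 2 + m + 1) : ℕ) : ℤ) • (1 : Matrix _ _ ℤ) ∧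
      (∀ i, (∑ j, H i j) = 2 * (m : ℤ) - 2 ∨ (∑ j, H i j) = 2 * (m : ℤ) + 2) := by
  classical
  obtain ⟨k, hk⟩ : ∃ k, m ^ 2 + m = 2 * k := by
    rcases Nat.even_mul_succ_self m with ⟨r, hr⟩
    have hrr : m * (m + 1) = m ^ 2 + m := by ring
    exact ⟨r, by linarith⟩
  have hcard : Fintype.card F = 4 * k + 1 := by rw [hF]; linarith
  have h2 : ringChar F ≠ 2 := by
    intro h
    have h' := FiniteField.even_card_of_char_two h
    rw [hcard] at h'
    omega
  have hsq : IsSquare (-1 : F) := FiniteField.isSquare_neg_one_iff.mpr (by rw [hcard]; omega)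
  have h1m : 1 ≤ m ^ 2 := Nat.one_le_pow 2 m hm
  have hcard2 : Fintype.card (Option F ⊕ Option F) = 4 * (m ^ 2 + m + 1) := by
    rw [Fintype.card_sum, Fintype.card_option, hF]
    ring
  let e : (Option F ⊕ Option F) ≃ Fin (4 * (m ^ 2 + m + 1)) := Fintype.equivFinOfCardEq hcard2
  refine ⟨(Stmt13Aux.Mmat D₀ D₁).submatrix e.symm e.symm,
    fun i j => Stmt13Aux.Mmat_pm D₀ D₁ _ _, ?_, ?_⟩
  · rw [Matrix.transpose_submatrix,
      Matrix.submatrix_mul_equiv (Stmt13Aux.Mmat D₀ D₁) (Stmt13Aux.Mmat D₀ D₁).transpose _ e.symm _,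
      Stmt13Aux.Mmat_mul D₀ D₁ h2 hsq]
    have hc : ((2 * Fintype.card F + 2 : ℤ)) = ((4 * (m ^ 2 + m + 1) : ℕ) : ℤ) := by
      rw [hF]; push_cast; ring
    rw [hc]
    ext i j
    simp only [Matrix.submatrix_apply, Matrix.smul_apply, Matrix.one_apply,
      EmbeddingLike.apply_eq_iff_eq]
  · intro i
    have hsum : ∑ j, (Stmt13Aux.Mmat D₀ D₁).submatrix (⇑e.symm) (⇑e.symm) i j
        = ∑ u, Stmt13Aux.Mmat D₀ D₁ (e.symm i) u :=
      Equiv.sum_comp e.symm (fun u => Stmt13Aux.Mmat D₀ D₁ (e.symm i) u)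
    rw [hsum, Stmt13Aux.Mmat_rowsum]
    have hrs : ∀ i', Stmt13Aux.rsgn D₀ D₁ i'
        = if 0 ≤ Stmt13Aux.Trow D₀ D₁ i' then (1:ℤ) else -1 := fun _ => rfl
    rcases hi' : e.symm i with (_ | j) | (_ | j)
    · have hT : Stmt13Aux.Trow D₀ D₁ (Sum.inl none) = 2*(m:ℤ)+2 := by
        rw [Stmt13Aux.Trow_inl_none, hD₀, hD₁, hF]
        push_cast
        ring
      rw [hrs]
      exact Stmt13Aux.sign_step hm (Or.inl hT)
    · have hT := Stmt13Aux.Trow_inl_some (C := C) (D₀ := D₀) (D₁ := D₁) hC h2 j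
      rw [hD₀, hD₁] at hT
      have hs := hint1 j
      simp only [Set.mem_insert_iff, Set.mem_singleton_iff] at hs
      rw [hrs]
      refine Stmt13Aux.sign_step hm ?_
      rcases hs with h | h | h | h
      · left
        rw [hT]
        have hz : ((D₀ ∩ ((fun x => x + j) '' (C ∪ {0}))).ncard : ℤ)
            + ((D₁ ∩ ((fun x => x + j) '' C)).ncard : ℤ) = ((m:ℤ))^2 := by
          exact_mod_cast congrArg (Nat.cast : ℕ → ℤ) h
        rw [hz]; push_cast; ring
      · right; left
        rw [hT]
        have hz : ((D₀ ∩ ((fun x => x + j) '' (C ∪ {0}))).ncard : ℤ)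
            + ((D₁ ∩ ((fun x => x + j) '' C)).ncard : ℤ) = ((m:ℤ))^2 + 1 := by
          exact_mod_cast congrArg (Nat.cast : ℕ → ℤ) h
        rw [hz]; push_cast; ring
      · right; right; left
        rw [hT]
        have hz : ((D₀ ∩ ((fun x => x + j) '' (C ∪ {0}))).ncard : ℤ)
            + ((D₁ ∩ ((fun x => x + j) '' C)).ncard : ℤ) = ((m:ℤ))^2 + m := by
          exact_mod_cast congrArg (Nat.cast : ℕ → ℤ) h
        rw [hz]; push_cast; ring
      · right; right; right
        rw [hT]
        have hz : ((D₀ ∩ ((fun x => x + j) '' (C ∪ {0}))).ncard : ℤ)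
            + ((D₁ ∩ ((fun x => x + j) '' C)).ncard : ℤ) = ((m:ℤ))^2 + m + 1 := by
          exact_mod_cast congrArg (Nat.cast : ℕ → ℤ) h
        rw [hz]; push_cast; ring
    · have hT : Stmt13Aux.Trow D₀ D₁ (Sum.inr none) = 2*(m:ℤ)-2 := by
        rw [Stmt13Aux.Trow_inr_none, hD₀, hD₁]
        push_cast
        ring
      rw [hrs]
      exact Stmt13Aux.sign_step hm (Or.inr (Or.inl hT))
    · have hT := Stmt13Aux.Trow_inr_some (C := C) (D₀ := D₀) (D₁ := D₁) hC h2 j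
      rw [hD₀, hD₁] at hT
      have hs := hint2 j
      simp only [Set.mem_insert_iff, Set.mem_singleton_iff] at hs
      rw [hrs]
      refine Stmt13Aux.sign_step hm ?_
      rcases hs with h | h | h | h
      · left
        rw [hT]
        have hz : ((D₀ ∩ ((fun x => x + j) '' C)).ncard : ℤ)
            + ((D₁ ∩ ((fun x => x + j) '' (Set.univ \ (C ∪ {0})))).ncard : ℤ)
            = ((m:ℤ))^2 - 1 := by
          have hzz := congrArg (Nat.cast : ℕ → ℤ) h
          rw [Nat.cast_sub h1m] at hzz
          push_cast at hzz
          linarith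
        rw [hz]; push_cast; ring
      · right; left
        rw [hT]
        have hz : ((D₀ ∩ ((fun x => x + j) '' C)).ncard : ℤ)
            + ((D₁ ∩ ((fun x => x + j) '' (Set.univ \ (C ∪ {0})))).ncard : ℤ)
            = ((m:ℤ))^2 := by
          exact_mod_cast congrArg (Nat.cast : ℕ → ℤ) h
        rw [hz]; push_cast; ring
      · right; right; left
        rw [hT]
        have hz : ((D₀ ∩ ((fun x => x + j) '' C)).ncard : ℤ)
            + ((D₁ ∩ ((fun x => x + j) '' (Set.univ \ (C ∪ {0})))).ncard : ℤ)
            = ((m:ℤ))^2 + m - 1 := by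
          have h1m' : 1 ≤ m ^ 2 + m := by omega
          have hzz := congrArg (Nat.cast : ℕ → ℤ) h
          rw [Nat.cast_sub h1m'] at hzz
          push_cast at hzz
          linarith
        rw [hz]; push_cast; ring
      · right; right; right
        rw [hT]
        have hz : ((D₀ ∩ ((fun x => x + j) '' C)).ncard : ℤ)
            + ((D₁ ∩ ((fun x => x + j) '' (Set.univ \ (C ∪ {0})))).ncard : ℤ)
            = ((m:ℤ))^2 + m := by
          exact_mod_cast congrArg (Nat.cast : ℕ → ℤ) h
        rw [hz]; push_cast; ring
end
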